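/- arXiv:1710.04054 — 10 statements merged into one kernel-verified Lean document; each statement's English description precedes it below -/
import Mathlib

section
/- For smooth solutions of the layer-averaged hydrostatic Euler system, each layer satisfies the energy balance ∂t E_α + ∂x( u_α ( E_α + (g h /2) h_α ) ) = ( u_{α+1/2} u_α − u_α²/2 + g η ) G_{α+1/2} − ( u_{α−1/2} u_α − u_α²/2 + g η ) G_{α−1/2}, for every α = 1,…,N. -/
open Finset

/-- Partial derivative in time of a function of `(t,x)`. -/
noncomputable def pt (f : ℝ → ℝ → ℝ) (t x : ℝ) : ℝ := deriv (fun s => f s x) t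

/-- Partial derivative in space of a function of `(t,x)`. -/
noncomputable def px (f : ℝ → ℝ → ℝ) (t x : ℝ) : ℝ := deriv (fun y => f t y) x

private lemma slice_t {f : ℝ → ℝ → ℝ}
    (hf : ContDiff ℝ 1 (fun p : ℝ × ℝ => f p.1 p.2)) (t x : ℝ) :
    HasDerivAt (fun s => f s x) (pt f t x) t := by
  have hd : DifferentiableAt ℝ (fun s => f s x) t := by
    have hd' := ((hf.differentiable one_ne_zero) (t, x)).comp t
      (DifferentiableAt.prodMk (differentiableAt_id : DifferentiableAt ℝ id t) (differentiableAt_const x))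
    exact hd'
  exact hd.hasDerivAt

private lemma slice_x {f : ℝ → ℝ → ℝ}
    (hf : ContDiff ℝ 1 (fun p : ℝ × ℝ => f p.1 p.2)) (t x : ℝ) :
    HasDerivAt (fun y => f t y) (px f t x) x := by
  have hd : DifferentiableAt ℝ (fun y => f t y) x :=
    ((hf.differentiable one_ne_zero) (t, x)).comp x
      (DifferentiableAt.prodMk (differentiableAt_const t) differentiableAt_id)
  exact hd.hasDerivAt

/-- Layer energy balance for smooth solutions of the layer-averaged hydrostatic Euler
system: for every layer `α = 1,…,N`,
`∂t E_α + ∂x(u_α(E_α + (gh/2)h_α))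
  = (u_{α+1/2}u_α − u_α²/2 + gη)G_{α+1/2} − (u_{α−1/2}u_α − u_α²/2 + gη)G_{α−1/2}`,
where `h_α = l_α h`, `η = h + z_b`, `E_α = h_α u_α²/2 + g h_α (h/2 + z_b)`,
`G_{α+1/2} = Σ_{j≤α} (∂t h_j + ∂x(h_j u_j))` (index `α` stands for interface `α+1/2`,
so `G 0 = G_{1/2} = 0` is the empty sum and `G N = G_{N+1/2} = 0`), and
`u_{α+1/2} = u_α` if `G_{α+1/2} ≤ 0`, `u_{α+1}` otherwise. -/
theorem layer_energy_balance
    (g : ℝ) (hg : 0 < g)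
    (N : ℕ) (hN : 1 ≤ N)
    (l : ℕ → ℝ) (hl : ∀ α ∈ Icc 1 N, 0 < l α)
    (hlsum : ∑ α ∈ Icc 1 N, l α = 1)
    (zb : ℝ → ℝ) (hzb : ContDiff ℝ 1 zb)
    (h : ℝ → ℝ → ℝ) (u : ℕ → ℝ → ℝ → ℝ)
    (hhC1 : ContDiff ℝ 1 (fun p : ℝ × ℝ => h p.1 p.2))
    (hhnn : ∀ t x, 0 ≤ h t x)
    (huC1 : ∀ α ∈ Icc 1 N, ContDiff ℝ 1 (fun p : ℝ × ℝ => u α p.1 p.2))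
    (hlay : ℕ → ℝ → ℝ → ℝ) (hhlay : ∀ (α : ℕ) (t x : ℝ), hlay α t x = l α * h t x)
    (G : ℕ → ℝ → ℝ → ℝ)
    (hG : ∀ (α : ℕ) (t x : ℝ), G α t x =
      ∑ j ∈ Icc 1 α, (pt (hlay j) t x + px (fun t x => hlay j t x * u j t x) t x))
    (hGN : ∀ t x, G N t x = 0)
    (uint : ℕ → ℝ → ℝ → ℝ)
    (huint : ∀ (α : ℕ) (t x : ℝ),
      uint α t x = if G α t x ≤ 0 then u α t x else u (α + 1) t x)
    (E : ℕ → ℝ → ℝ → ℝ)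
    (hE : ∀ (α : ℕ) (t x : ℝ), E α t x =
      hlay α t x * (u α t x) ^ 2 / 2 + g * hlay α t x * (h t x / 2 + zb x))
    (mass : ∀ t x,
      pt h t x + ∑ α ∈ Icc 1 N, px (fun t x => hlay α t x * u α t x) t x = 0)
    (mom : ∀ α ∈ Icc 1 N, ∀ t x : ℝ,
      pt (fun t x => hlay α t x * u α t x) t x
        + px (fun t x => hlay α t x * (u α t x) ^ 2 + g / 2 * hlay α t x * h t x) t x
      = -(g * hlay α t x * deriv zb x)
        + uint α t x * G α t x - uint (α - 1) t x * G (α - 1) t x) :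
    ∀ α ∈ Icc 1 N, ∀ t x : ℝ,
      pt (E α) t x
        + px (fun t x => u α t x * (E α t x + g * h t x / 2 * hlay α t x)) t x
      = (uint α t x * u α t x - (u α t x) ^ 2 / 2 + g * (h t x + zb x)) * G α t x
        - (uint (α - 1) t x * u α t x - (u α t x) ^ 2 / 2 + g * (h t x + zb x))
            * G (α - 1) t x := by
  intro α hα t x
  have hα1 : 1 ≤ α := (mem_Icc.mp hα).1
  obtain ⟨k, rfl⟩ : ∃ k, α = k + 1 := ⟨α - 1, (Nat.succ_pred_eq_of_pos hα1).symm⟩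
  have Hht := slice_t hhC1 t x
  have Hhx := slice_x hhC1 t x
  have Hut := slice_t (huC1 (k+1) hα) t x
  have Hux := slice_x (huC1 (k+1) hα) t x
  have Hz : HasDerivAt zb (deriv zb x) x := ((hzb.differentiable one_ne_zero) x).hasDerivAt
  -- time derivative of the layer height
  have pthlay : pt (hlay (k+1)) t x = l (k+1) * pt h t x := by
    show deriv (fun s => hlay (k+1) s x) t = _
    rw [show (fun s => hlay (k+1) s x) = (fun s => l (k+1) * h s x)
        from funext fun s => by rw [hhlay]]
    exact (Hht.const_mul (l (k+1))).deriv
  -- time derivative of the layer discharge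
  have ptq : pt (fun t x => hlay (k+1) t x * u (k+1) t x) t x
      = l (k+1) * (pt h t x * u (k+1) t x + h t x * pt (u (k+1)) t x) := by
    show deriv (fun s => hlay (k+1) s x * u (k+1) s x) t = _
    rw [show (fun s => hlay (k+1) s x * u (k+1) s x)
          = (fun s => l (k+1) * h s x * u (k+1) s x)
        from funext fun s => by rw [hhlay]]
    exact ((Hht.const_mul (l (k+1))).mul Hut).deriv.trans (by ring)
  -- space derivative of the layer discharge
  have pxq : px (fun t x => hlay (k+1) t x * u (k+1) t x) t x
      = l (k+1) * (px h t x * u (k+1) t x + h t x * px (u (k+1)) t x) := by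
    show deriv (fun y => hlay (k+1) t y * u (k+1) t y) x = _
    rw [show (fun y => hlay (k+1) t y * u (k+1) t y)
          = (fun y => l (k+1) * h t y * u (k+1) t y)
        from funext fun y => by rw [hhlay]]
    exact ((Hhx.const_mul (l (k+1))).mul Hux).deriv.trans (by ring)
  -- time derivative of the layer energy
  have ptE : pt (E (k+1)) t x
      = l (k+1) * (pt h t x * (u (k+1) t x * u (k+1) t x) / 2
          + h t x * u (k+1) t x * pt (u (k+1)) t x)
        + g * l (k+1) * (pt h t x * (h t x / 2 + zb x) + h t x * pt h t x / 2) := by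
    show deriv (fun s => E (k+1) s x) t = _
    rw [show (fun s => E (k+1) s x)
          = (fun s => l (k+1) * h s x * (u (k+1) s x * u (k+1) s x) / 2
              + g * (l (k+1) * h s x) * (h s x / 2 + zb x))
        from funext fun s => by rw [hE, hhlay]; ring]
    exact ((((Hht.const_mul (l (k+1))).mul (Hut.mul Hut)).div_const 2).add
      (((Hht.const_mul (l (k+1))).const_mul g).mul
        ((Hht.div_const 2).add_const (zb x)))).deriv.trans (by simp only [Pi.mul_apply, Pi.add_apply]; ring)
  -- space derivative of the momentum flux
  have pxphi : px (fun t x => hlay (k+1) t x * u (k+1) t x ^ 2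
        + g / 2 * hlay (k+1) t x * h t x) t x
      = l (k+1) * (px h t x * (u (k+1) t x * u (k+1) t x)
          + 2 * h t x * u (k+1) t x * px (u (k+1)) t x)
        + g * l (k+1) * h t x * px h t x := by
    show deriv (fun y => hlay (k+1) t y * u (k+1) t y ^ 2
        + g / 2 * hlay (k+1) t y * h t y) x = _
    rw [show (fun y => hlay (k+1) t y * u (k+1) t y ^ 2 + g / 2 * hlay (k+1) t y * h t y)
          = (fun y => l (k+1) * h t y * (u (k+1) t y * u (k+1) t y)
              + g / 2 * (l (k+1) * h t y) * h t y)
        from funext fun y => by rw [hhlay]; ring]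
    exact (((Hhx.const_mul (l (k+1))).mul (Hux.mul Hux)).add
      (((Hhx.const_mul (l (k+1))).const_mul (g/2)).mul Hhx)).deriv.trans (by simp only [Pi.mul_apply, Pi.add_apply]; ring)
  -- space derivative of the energy flux
  have pxF : px (fun t x => u (k+1) t x * (E (k+1) t x + g * h t x / 2 * hlay (k+1) t x)) t x
      = px (u (k+1)) t x * (l (k+1) * h t x * (u (k+1) t x * u (k+1) t x) / 2
          + g * l (k+1) * (h t x * (h t x + zb x)))
        + u (k+1) t x * (l (k+1) * (px h t x * (u (k+1) t x * u (k+1) t x)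
              + 2 * h t x * u (k+1) t x * px (u (k+1)) t x) / 2
            + g * l (k+1) * (px h t x * (h t x + zb x)
              + h t x * (px h t x + deriv zb x))) := by
    show deriv (fun y => u (k+1) t y * (E (k+1) t y + g * h t y / 2 * hlay (k+1) t y)) x = _
    rw [show (fun y => u (k+1) t y * (E (k+1) t y + g * h t y / 2 * hlay (k+1) t y))
          = (fun y => u (k+1) t y * (l (k+1) * h t y * (u (k+1) t y * u (k+1) t y) / 2
              + g * (l (k+1) * h t y) * (h t y / 2 + zb y)
              + g * (h t y / 2) * (l (k+1) * h t y)))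
        from funext fun y => by rw [hE, hhlay]; ring]
    exact (Hux.mul ((((Hhx.const_mul (l (k+1))).mul (Hux.mul Hux)).div_const 2).add
        (((Hhx.const_mul (l (k+1))).const_mul g).mul ((Hhx.div_const 2).add Hz)) |>.add
        (((Hhx.div_const 2).const_mul g).mul (Hhx.const_mul (l (k+1)))))).deriv.trans
      (by simp only [Pi.mul_apply, Pi.add_apply]; ring)
  -- mass exchange across the interfaces of layer `k+1`
  have Gdiff : G (k+1) t x - G k t x
      = l (k+1) * pt h t x
        + l (k+1) * (px h t x * u (k+1) t x + h t x * px (u (k+1)) t x) := by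
    rw [hG (k+1), hG k, Finset.sum_Icc_succ_top (Nat.le_add_left 1 k), pthlay, pxq]
    ring
  have momα := mom (k+1) hα t x
  simp only [Nat.add_sub_cancel] at momα ⊢
  rw [ptq, pxphi] at momα
  rw [hhlay] at momα
  rw [ptE, pxF]
  linear_combination u (k+1) t x * momα
    + (u (k+1) t x * u (k+1) t x / 2 - g * (h t x + zb x)) * Gdiff
end

section
/- For smooth solutions of the layer-averaged hydrostatic Euler system, the global energy balance ∂t ( Σ_{α=1}^N E_α ) + ∂x ( Σ_{α=1}^N u_α ( E_α + (g h /2) h_α ) ) = − Σ_{α=1}^{N−1} (1/2) ( u_{α+1} − u_α )² |G_{α+1/2}| holds; in particular the right-hand side is nonpositive. -/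
open Finset

/-- Global energy balance for smooth solutions of the layer-averaged hydrostatic Euler
system:
`∂t(Σ_α E_α) + ∂x(Σ_α u_α(E_α + (gh/2)h_α))
   = −Σ_{α=1}^{N−1} (1/2)(u_{α+1} − u_α)² |G_{α+1/2}|`,
and in particular the right-hand side is nonpositive. Here `h_α = l_α h`,
`E_α = h_α u_α²/2 + g h_α (h/2 + z_b)`, `G_{α+1/2} = Σ_{j≤α}(∂t h_j + ∂x(h_j u_j))`
(index `α` stands for interface `α+1/2`), and `u_{α+1/2}` is the upwinded
interface velocity. -/
theorem global_energy_balance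
    (g : ℝ) (hg : 0 < g)
    (N : ℕ) (hN : 1 ≤ N)
    (l : ℕ → ℝ) (hl : ∀ α ∈ Icc 1 N, 0 < l α)
    (hlsum : ∑ α ∈ Icc 1 N, l α = 1)
    (zb : ℝ → ℝ) (hzb : ContDiff ℝ 1 zb)
    (h : ℝ → ℝ → ℝ) (u : ℕ → ℝ → ℝ → ℝ)
    (hhC1 : ContDiff ℝ 1 (fun p : ℝ × ℝ => h p.1 p.2))
    (hhnn : ∀ t x, 0 ≤ h t x)
    (huC1 : ∀ α ∈ Icc 1 N, ContDiff ℝ 1 (fun p : ℝ × ℝ => u α p.1 p.2))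
    (hlay : ℕ → ℝ → ℝ → ℝ) (hhlay : ∀ (α : ℕ) (t x : ℝ), hlay α t x = l α * h t x)
    (G : ℕ → ℝ → ℝ → ℝ)
    (hG : ∀ (α : ℕ) (t x : ℝ), G α t x =
      ∑ j ∈ Icc 1 α, (pt (hlay j) t x + px (fun t x => hlay j t x * u j t x) t x))
    (hGN : ∀ t x, G N t x = 0)
    (uint : ℕ → ℝ → ℝ → ℝ)
    (huint : ∀ (α : ℕ) (t x : ℝ),
      uint α t x = if G α t x ≤ 0 then u α t x else u (α + 1) t x)
    (E : ℕ → ℝ → ℝ → ℝ)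
    (hE : ∀ (α : ℕ) (t x : ℝ), E α t x =
      hlay α t x * (u α t x) ^ 2 / 2 + g * hlay α t x * (h t x / 2 + zb x))
    (mass : ∀ t x,
      pt h t x + ∑ α ∈ Icc 1 N, px (fun t x => hlay α t x * u α t x) t x = 0)
    (mom : ∀ α ∈ Icc 1 N, ∀ t x : ℝ,
      pt (fun t x => hlay α t x * u α t x) t x
        + px (fun t x => hlay α t x * (u α t x) ^ 2 + g / 2 * hlay α t x * h t x) t x
      = -(g * hlay α t x * deriv zb x)
        + uint α t x * G α t x - uint (α - 1) t x * G (α - 1) t x) :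
    ∀ t x : ℝ,
      pt (fun t x => ∑ α ∈ Icc 1 N, E α t x) t x
        + px (fun t x =>
            ∑ α ∈ Icc 1 N, u α t x * (E α t x + g * h t x / 2 * hlay α t x)) t x
      = -∑ α ∈ Icc 1 (N - 1),
            (1 / 2) * (u (α + 1) t x - u α t x) ^ 2 * |G α t x| ∧
      -∑ α ∈ Icc 1 (N - 1),
            (1 / 2) * (u (α + 1) t x - u α t x) ^ 2 * |G α t x| ≤ 0 := by
  intro t x
  have hNsub : N - 1 + 1 = N := Nat.succ_pred_eq_of_pos hN
  -- differentiability atoms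
  have Hh : Differentiable ℝ (fun p : ℝ × ℝ => h p.1 p.2) := hhC1.differentiable one_ne_zero
  have dht : HasDerivAt (fun s => h s x) (pt h t x) t := by
    have hdiff : DifferentiableAt ℝ (fun s => h s x) t := by
      have := (Hh (t, x)).comp t
        ((differentiableAt_id.prodMk (differentiableAt_const x)) :
          DifferentiableAt ℝ (fun s : ℝ => (s, x)) t)
      simpa [Function.comp_def] using this
    simpa [pt] using hdiff.hasDerivAt
  have dhx : HasDerivAt (fun y => h t y) (px h t x) x := by
    have hdiff : DifferentiableAt ℝ (fun y => h t y) x := by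
      have := (Hh (t, x)).comp x
        (((differentiableAt_const t).prodMk differentiableAt_id) :
          DifferentiableAt ℝ (fun y : ℝ => (t, y)) x)
      simpa [Function.comp_def] using this
    simpa [px] using hdiff.hasDerivAt
  have dut : ∀ α ∈ Icc 1 N, HasDerivAt (fun s => u α s x) (pt (u α) t x) t := by
    intro α hα
    have Hu : Differentiable ℝ (fun p : ℝ × ℝ => u α p.1 p.2) :=
      (huC1 α hα).differentiable one_ne_zero
    have hdiff : DifferentiableAt ℝ (fun s => u α s x) t := by
      have := (Hu (t, x)).comp t
        ((differentiableAt_id.prodMk (differentiableAt_const x)) :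
          DifferentiableAt ℝ (fun s : ℝ => (s, x)) t)
      simpa [Function.comp_def] using this
    simpa [pt] using hdiff.hasDerivAt
  have dux : ∀ α ∈ Icc 1 N, HasDerivAt (fun y => u α t y) (px (u α) t x) x := by
    intro α hα
    have Hu : Differentiable ℝ (fun p : ℝ × ℝ => u α p.1 p.2) :=
      (huC1 α hα).differentiable one_ne_zero
    have hdiff : DifferentiableAt ℝ (fun y => u α t y) x := by
      have := (Hu (t, x)).comp x
        (((differentiableAt_const t).prodMk differentiableAt_id) :
          DifferentiableAt ℝ (fun y : ℝ => (t, y)) x)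
      simpa [Function.comp_def] using this
    simpa [px] using hdiff.hasDerivAt
  have dzb : HasDerivAt zb (deriv zb x) x := (hzb.differentiable one_ne_zero x).hasDerivAt
  -- e1 : time derivative of the total energy
  have e1 : pt (fun t x => ∑ α ∈ Icc 1 N, E α t x) t x
      = ∑ α ∈ Icc 1 N, (l α * pt h t x * (u α t x) ^ 2 / 2
          + l α * h t x * u α t x * pt (u α) t x
          + g * (l α * pt h t x) * (h t x / 2 + zb x)
          + g * (l α * h t x) * (pt h t x / 2)) := by
    have hfun : (fun s => ∑ α ∈ Icc 1 N, E α s x)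
        = (fun s => ∑ α ∈ Icc 1 N, (l α * h s x * (u α s x * u α s x) / 2
            + g * (l α * h s x) * (h s x / 2 + zb x))) := by
      funext s
      refine Finset.sum_congr rfl fun α _ => ?_
      rw [hE, hhlay]; ring
    have hd : HasDerivAt (fun s => ∑ α ∈ Icc 1 N, (l α * h s x * (u α s x * u α s x) / 2
        + g * (l α * h s x) * (h s x / 2 + zb x)))
        (∑ α ∈ Icc 1 N, (l α * pt h t x * (u α t x) ^ 2 / 2
          + l α * h t x * u α t x * pt (u α) t x
          + g * (l α * pt h t x) * (h t x / 2 + zb x)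
          + g * (l α * h t x) * (pt h t x / 2))) t := by
      refine HasDerivAt.fun_sum fun α hα => ?_
      exact ((((dht.const_mul (l α)).fun_mul ((dut α hα).fun_mul (dut α hα))).div_const 2).add
        (((dht.const_mul (l α)).const_mul g).fun_mul
          ((dht.div_const 2).add_const (zb x)))).congr_deriv (by ring)
    show deriv (fun s => ∑ α ∈ Icc 1 N, E α s x) t = _
    rw [hfun]
    exact hd.deriv
  -- e2 : space derivative of the total energy flux
  have e2 : px (fun t x =>
        ∑ α ∈ Icc 1 N, u α t x * (E α t x + g * h t x / 2 * hlay α t x)) t x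
      = ∑ α ∈ Icc 1 N, (px (u α) t x * (l α * h t x * (u α t x) ^ 2 / 2
            + g * (l α * h t x) * (h t x / 2 + zb x) + g * h t x / 2 * (l α * h t x))
          + u α t x * (l α * px h t x * (u α t x) ^ 2 / 2
            + l α * h t x * u α t x * px (u α) t x
            + g * (l α * px h t x) * (h t x / 2 + zb x)
            + g * (l α * h t x) * (px h t x / 2 + deriv zb x)
            + g * px h t x / 2 * (l α * h t x)
            + g * h t x / 2 * (l α * px h t x))) := by
    have hfun : (fun y => ∑ α ∈ Icc 1 N, u α t y * (E α t y + g * h t y / 2 * hlay α t y))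
        = (fun y => ∑ α ∈ Icc 1 N, u α t y * (l α * h t y * (u α t y * u α t y) / 2
            + g * (l α * h t y) * (h t y / 2 + zb y)
            + g * h t y / 2 * (l α * h t y))) := by
      funext y
      refine Finset.sum_congr rfl fun α _ => ?_
      rw [hE, hhlay]; ring
    have hd : HasDerivAt (fun y => ∑ α ∈ Icc 1 N, u α t y * (l α * h t y * (u α t y * u α t y) / 2
            + g * (l α * h t y) * (h t y / 2 + zb y)
            + g * h t y / 2 * (l α * h t y)))
        (∑ α ∈ Icc 1 N, (px (u α) t x * (l α * h t x * (u α t x) ^ 2 / 2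
            + g * (l α * h t x) * (h t x / 2 + zb x) + g * h t x / 2 * (l α * h t x))
          + u α t x * (l α * px h t x * (u α t x) ^ 2 / 2
            + l α * h t x * u α t x * px (u α) t x
            + g * (l α * px h t x) * (h t x / 2 + zb x)
            + g * (l α * h t x) * (px h t x / 2 + deriv zb x)
            + g * px h t x / 2 * (l α * h t x)
            + g * h t x / 2 * (l α * px h t x)))) x := by
      refine HasDerivAt.fun_sum fun α hα => ?_
      have t1 := ((dhx.const_mul (l α)).fun_mul ((dux α hα).fun_mul (dux α hα))).div_const 2
      have t2 := ((dhx.const_mul (l α)).const_mul g).fun_mul ((dhx.div_const 2).fun_add dzb)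
      have t3 := ((dhx.const_mul g).div_const 2).fun_mul (dhx.const_mul (l α))
      exact ((dux α hα).fun_mul ((t1.fun_add t2).fun_add t3)).congr_deriv (by ring)
    show deriv (fun y => ∑ α ∈ Icc 1 N, u α t y * (E α t y + g * h t y / 2 * hlay α t y)) x = _
    rw [hfun]
    exact hd.deriv
  -- e3 : time derivative of a layer height
  have e3 : ∀ j : ℕ, pt (hlay j) t x = l j * pt h t x := by
    intro j
    have hfun : (fun s => hlay j s x) = fun s => l j * h s x := funext fun s => hhlay j s x
    show deriv (fun s => hlay j s x) t = _
    rw [hfun]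
    exact (dht.const_mul (l j)).deriv
  -- e4 : space derivative of a layer discharge
  have e4 : ∀ j ∈ Icc 1 N, px (fun t x => hlay j t x * u j t x) t x
      = l j * px h t x * u j t x + l j * h t x * px (u j) t x := by
    intro j hj
    have hfun : (fun y => hlay j t y * u j t y) = fun y => l j * h t y * u j t y :=
      funext fun y => by rw [hhlay]
    show deriv (fun y => hlay j t y * u j t y) x = _
    rw [hfun]
    exact ((dhx.const_mul (l j)).mul (dux j hj)).deriv
  -- e5 : time derivative of a layer discharge
  have e5 : ∀ j ∈ Icc 1 N, pt (fun t x => hlay j t x * u j t x) t x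
      = l j * pt h t x * u j t x + l j * h t x * pt (u j) t x := by
    intro j hj
    have hfun : (fun s => hlay j s x * u j s x) = fun s => l j * h s x * u j s x :=
      funext fun s => by rw [hhlay]
    show deriv (fun s => hlay j s x * u j s x) t = _
    rw [hfun]
    exact ((dht.const_mul (l j)).mul (dut j hj)).deriv
  -- e6 : space derivative of the momentum flux
  have e6 : ∀ j ∈ Icc 1 N,
      px (fun t x => hlay j t x * (u j t x) ^ 2 + g / 2 * hlay j t x * h t x) t x
      = l j * px h t x * (u j t x) ^ 2 + 2 * (l j * h t x) * u j t x * px (u j) t x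
        + g * (l j * h t x) * px h t x := by
    intro j hj
    have hfun : (fun y => hlay j t y * (u j t y) ^ 2 + g / 2 * hlay j t y * h t y)
        = fun y => l j * h t y * (u j t y * u j t y) + g / 2 * (l j * h t y) * h t y := by
      funext y; rw [hhlay]; ring
    show deriv (fun y => hlay j t y * (u j t y) ^ 2 + g / 2 * hlay j t y * h t y) x = _
    rw [hfun]
    exact ((((dhx.const_mul (l j)).fun_mul ((dux j hj).fun_mul (dux j hj))).add
      (((dhx.const_mul (l j)).const_mul (g / 2)).fun_mul dhx)).congr_deriv (by ring)).deriv
  -- momentum equation in expanded form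
  have mom' : ∀ α ∈ Icc 1 N,
      l α * pt h t x * u α t x + l α * h t x * pt (u α) t x
        + (l α * px h t x * (u α t x) ^ 2 + 2 * (l α * h t x) * u α t x * px (u α) t x
            + g * (l α * h t x) * px h t x)
      = -(g * (l α * h t x) * deriv zb x)
        + uint α t x * G α t x - uint (α - 1) t x * G (α - 1) t x := by
    intro α hα
    have := mom α hα t x
    rw [e5 α hα, e6 α hα, hhlay] at this
    exact this
  -- interface mass-exchange difference
  have Gstep : ∀ α ∈ Icc 1 N, G α t x - G (α - 1) t x
      = l α * pt h t x + (l α * px h t x * u α t x + l α * h t x * px (u α) t x) := by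
    intro α hα
    obtain ⟨β, rfl⟩ : ∃ β, α = β + 1 :=
      ⟨α - 1, (Nat.succ_pred_eq_of_pos (mem_Icc.mp hα).1).symm⟩
    rw [hG, hG]
    simp only [Nat.add_sub_cancel]
    rw [Finset.sum_Icc_succ_top (Nat.le_add_left 1 β)]
    rw [e3 (β + 1), e4 (β + 1) hα]
    ring
  have G0 : G 0 t x = 0 := by rw [hG]; simp
  refine ⟨?_, ?_⟩
  · -- the energy balance
    rw [e1, e2, ← Finset.sum_add_distrib]
    have key : ∀ α ∈ Icc 1 N,
        (l α * pt h t x * (u α t x) ^ 2 / 2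
          + l α * h t x * u α t x * pt (u α) t x
          + g * (l α * pt h t x) * (h t x / 2 + zb x)
          + g * (l α * h t x) * (pt h t x / 2))
        + (px (u α) t x * (l α * h t x * (u α t x) ^ 2 / 2
            + g * (l α * h t x) * (h t x / 2 + zb x) + g * h t x / 2 * (l α * h t x))
          + u α t x * (l α * px h t x * (u α t x) ^ 2 / 2
            + l α * h t x * u α t x * px (u α) t x
            + g * (l α * px h t x) * (h t x / 2 + zb x)
            + g * (l α * h t x) * (px h t x / 2 + deriv zb x)
            + g * px h t x / 2 * (l α * h t x)
            + g * h t x / 2 * (l α * px h t x)))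
        = (u α t x * uint α t x - (u α t x) ^ 2 / 2 + g * (h t x + zb x)) * G α t x
          - (u α t x * uint (α - 1) t x - (u α t x) ^ 2 / 2 + g * (h t x + zb x))
              * G (α - 1) t x := by
      intro α hα
      linear_combination u α t x * mom' α hα
        + ((u α t x) ^ 2 / 2 - g * (h t x + zb x)) * Gstep α hα
    rw [Finset.sum_congr rfl key, Finset.sum_sub_distrib]
    have A : (∑ α ∈ Icc 1 N,
          (u α t x * uint α t x - (u α t x) ^ 2 / 2 + g * (h t x + zb x)) * G α t x)
        = ∑ α ∈ Icc 1 (N - 1),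
          (u α t x * uint α t x - (u α t x) ^ 2 / 2 + g * (h t x + zb x)) * G α t x := by
      conv_lhs => rw [← hNsub]
      rw [Finset.sum_Icc_succ_top (Nat.le_add_left 1 (N - 1))]
      rw [hNsub, hGN, mul_zero, add_zero]
    have B : (∑ α ∈ Icc 1 N,
          (u α t x * uint (α - 1) t x - (u α t x) ^ 2 / 2 + g * (h t x + zb x))
            * G (α - 1) t x)
        = ∑ α ∈ Icc 1 (N - 1),
          (u (α + 1) t x * uint α t x - (u (α + 1) t x) ^ 2 / 2 + g * (h t x + zb x))
            * G α t x := by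
      have hmap : Icc 1 N = (Icc 0 (N - 1)).map (addRightEmbedding 1) := by
        rw [Finset.map_add_right_Icc, hNsub]
      rw [hmap, Finset.sum_map]
      simp only [addRightEmbedding_apply, Nat.add_sub_cancel]
      have hins : Icc 0 (N - 1) = insert 0 (Icc 1 (N - 1)) := by
        ext a
        simp only [mem_Icc, mem_insert]
        omega
      rw [hins, Finset.sum_insert (by simp)]
      rw [G0, mul_zero, zero_add]
    rw [A, B, ← Finset.sum_sub_distrib]
    rw [← Finset.sum_neg_distrib]
    refine Finset.sum_congr rfl fun α hα => ?_
    rw [huint α t x]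
    rcases le_or_gt (G α t x) 0 with hle | hlt
    · rw [if_pos hle, abs_of_nonpos hle]; ring
    · rw [if_neg (not_le.mpr hlt), abs_of_pos hlt]; ring
  · -- nonpositivity of the right-hand side
    refine neg_nonpos.mpr (Finset.sum_nonneg fun α _ => ?_)
    positivity
end

section
/- For any h ≥ 0, u ∈ ℝ, z_b ∈ ℝ, any f ≥ 0 and any ξ ∈ ℝ, one has the subdifferential inequality H(f, ξ, z_b) ≥ H( M̄(h,u,ξ), ξ, z_b ) + ( g h + g z_b − u²/2 + ξ u ) ( f − M̄(h,u,ξ) ). -/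
/-- The kinetic Maxwellian `M̄(h,u,ξ) = (1/(gπ))·max(2gh − (ξ−u)², 0)^{1/2}`. -/
noncomputable def Mbar (g h u ξ : ℝ) : ℝ :=
  Real.sqrt (max (2 * g * h - (ξ - u) ^ 2) 0) / (g * Real.pi)

/-- The kinetic entropy `H(f,ξ,z) = (ξ²/2) f + (g²π²/6) f³ + g z f`. -/
noncomputable def Hent (g f ξ z : ℝ) : ℝ :=
  ξ ^ 2 / 2 * f + g ^ 2 * Real.pi ^ 2 / 6 * f ^ 3 + g * z * f

/-- Subdifferential inequality for the kinetic entropy at the Maxwellian: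
for any `h ≥ 0`, `u ∈ ℝ`, `z_b ∈ ℝ`, `f ≥ 0` and `ξ ∈ ℝ`,
`H(f,ξ,z_b) ≥ H(M̄(h,u,ξ),ξ,z_b) + (gh + gz_b − u²/2 + ξu)(f − M̄(h,u,ξ))`. -/
theorem kinetic_entropy_subdifferential_inequality
    (g : ℝ) (hg : 0 < g) (h u zb f ξ : ℝ) (hh : 0 ≤ h) (hf : 0 ≤ f) :
    Hent g f ξ zb ≥
      Hent g (Mbar g h u ξ) ξ zb
        + (g * h + g * zb - u ^ 2 / 2 + ξ * u) * (f - Mbar g h u ξ) := by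
  have hπ : (0:ℝ) < Real.pi := Real.pi_pos
  have hgπ : (0:ℝ) < g * Real.pi := mul_pos hg hπ
  set m := Mbar g h u ξ with hm
  have hm0 : 0 ≤ m := div_nonneg (Real.sqrt_nonneg _) hgπ.le
  have hmsq : g ^ 2 * Real.pi ^ 2 * m ^ 2 = max (2 * g * h - (ξ - u) ^ 2) 0 := by
    rw [hm, Mbar, div_pow, Real.sq_sqrt (le_max_right _ _)]
    field_simp
  rcases le_or_gt (2 * g * h - (ξ - u) ^ 2) 0 with hA | hA
  · have hmz : m = 0 := by
      rw [hm, Mbar, max_eq_right hA, Real.sqrt_zero, zero_div]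
    rw [hmz]
    unfold Hent
    nlinarith [mul_nonneg (mul_nonneg (sq_nonneg g) (sq_nonneg Real.pi))
      (mul_nonneg (mul_nonneg hf hf) hf)]
  · have hA' : g ^ 2 * Real.pi ^ 2 * m ^ 2 = 2 * g * h - (ξ - u) ^ 2 := by
      rw [hmsq, max_eq_left hA.le]
    unfold Hent
    nlinarith [mul_nonneg (mul_nonneg (mul_nonneg (sq_nonneg g) (sq_nonneg Real.pi))
      (sq_nonneg (f - m))) (by linarith : (0:ℝ) ≤ f + 2 * m)]
end

section
/- Energy minimization principle: let f : ℝ → [0,∞) be measurable with h := ∫_ℝ f(ξ) dξ and h u := ∫_ℝ ξ f(ξ) dξ finite (u ∈ ℝ arbitrary if h = 0). Then h u²/2 + g h²/2 + g z_b h ≤ ∫_ℝ H( f(ξ), ξ, z_b ) dξ; that is, among all nonnegative kinetic densities with the same first two ξ-moments, the Maxwellian M̄(h,u,·) minimizes the total kinetic entropy. -/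
open MeasureTheory

open Real intervalIntegral in
lemma integral_cos_pow_four :
    ∫ x in (-(π/2))..(π/2), Real.cos x ^ 4 = 3 * π / 8 := by
  have h4 := @integral_cos_pow (-(π/2)) (π/2) 2
  norm_num [Real.cos_pi_div_two, Real.cos_neg] at h4
  rw [h4]
  ring

open Real intervalIntegral in
lemma integral_sqrt_one_sub_sq_cube :
    ∫ x in (-1 : ℝ)..1, Real.sqrt (1 - x ^ 2) ^ 3 = 3 * π / 8 :=
  calc
    _ = ∫ x in sin (-(π / 2))..sin (π / 2), Real.sqrt (1 - x ^ 2) ^ 3 := by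
        rw [sin_neg, sin_pi_div_two]
    _ = ∫ x in (-(π / 2))..(π / 2), Real.sqrt (1 - sin x ^ 2) ^ 3 * cos x :=
        (integral_comp_mul_deriv (fun x _ => hasDerivAt_sin x) continuousOn_cos
          (by fun_prop)).symm
    _ = ∫ x in (-(π / 2))..(π / 2), cos x ^ 4 := by
        refine integral_congr fun x hx => ?_
        rw [Set.uIcc_of_le (by linarith [pi_pos])] at hx
        rw [← Real.cos_eq_sqrt_one_sub_sin_sq hx.1 hx.2]
        ring
    _ = 3 * π / 8 := integral_cos_pow_four

open Real in
lemma integral_sqrt_max_cube (a u : ℝ) (ha : 0 ≤ a) :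
    ∫ ξ : ℝ, Real.sqrt (max (a ^ 2 - (ξ - u) ^ 2) 0) ^ 3 = 3 * π / 8 * a ^ 4 := by
  set ψ : ℝ → ℝ := fun x => Real.sqrt (max (a ^ 2 - x ^ 2) 0) ^ 3 with hψ
  have hshift : ∫ ξ : ℝ, Real.sqrt (max (a ^ 2 - (ξ - u) ^ 2) 0) ^ 3 = ∫ x, ψ x :=
    integral_sub_right_eq_self ψ u
  rw [hshift]
  rcases eq_or_lt_of_le ha with rfl | hapos
  · have : ψ = fun _ => 0 := by
      funext x
      simp only [hψ]
      rw [max_eq_right (by nlinarith [sq_nonneg x])]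
      simp
    rw [this]
    simp
  · set χ : ℝ → ℝ := fun y => Real.sqrt (max (1 - y ^ 2) 0) ^ 3 with hχ
    have hcomp : ∀ y : ℝ, ψ (a * y) = a ^ 3 * χ y := by
      intro y
      simp only [hψ, hχ]
      have h1 : a ^ 2 - (a * y) ^ 2 = a ^ 2 * (1 - y ^ 2) := by ring
      have h2 : max (a ^ 2 * (1 - y ^ 2)) 0 = a ^ 2 * max (1 - y ^ 2) 0 := by
        rw [mul_max_of_nonneg _ _ (sq_nonneg a), mul_zero]
      rw [h1, h2, Real.sqrt_mul (sq_nonneg a), Real.sqrt_sq ha]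
      ring
    have hscale := MeasureTheory.Measure.integral_comp_mul_left ψ a
    simp only [hcomp] at hscale
    have hχint : ∫ y : ℝ, χ y = 3 * π / 8 := by
      have hsupp : Function.support χ ⊆ Set.Ioc (-1 : ℝ) 1 := by
        intro y hy
        simp only [Function.mem_support, hχ] at hy
        have hmax : max (1 - y ^ 2) 0 ≠ 0 := by
          intro h0
          rw [h0] at hy
          simp at hy
        have hpos : 0 < 1 - y ^ 2 := by
          rcases le_or_gt (1 - y ^ 2) 0 with h | h
          · exact absurd (max_eq_right h) hmax
          · exact h
        have : y ^ 2 < 1 := by linarith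
        have h1 : -1 < y := by nlinarith
        have h2 : y ≤ 1 := by nlinarith
        exact ⟨h1, h2⟩
      rw [← intervalIntegral.integral_eq_integral_of_support_subset hsupp]
      have : ∫ y in (-1 : ℝ)..1, χ y = ∫ y in (-1 : ℝ)..1, Real.sqrt (1 - y ^ 2) ^ 3 := by
        refine intervalIntegral.integral_congr fun y hy => ?_
        rw [Set.uIcc_of_le (by norm_num)] at hy
        simp only [hχ]
        rw [max_eq_left (by nlinarith [hy.1, hy.2])]
      rw [this, integral_sqrt_one_sub_sq_cube]
    rw [abs_of_pos (inv_pos.mpr hapos), smul_eq_mul] at hscale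
    have : ∫ x, ψ x = a * ∫ x : ℝ, a ^ 3 * χ x := by
      rw [hscale]
      field_simp
    rw [this, integral_const_mul, hχint]
    ring

/-- Energy minimization principle: if `f : ℝ → [0,∞)` is measurable with
`h = ∫ f dξ` and `h u = ∫ ξ f(ξ) dξ` finite, then
`h u²/2 + g h²/2 + g z_b h ≤ ∫ H(f(ξ), ξ, z_b) dξ`; i.e. among all nonnegative
kinetic densities with the same first two ξ-moments, the Maxwellian minimizes
the total kinetic entropy. -/
theorem kinetic_entropy_minimization
    (g : ℝ) (hg : 0 < g) (zb : ℝ)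
    (f : ℝ → ℝ) (hmeas : Measurable f) (hfnn : ∀ ξ, 0 ≤ f ξ)
    (hint : Integrable f) (hint' : Integrable (fun ξ => ξ * f ξ))
    (hintH : Integrable (fun ξ => Hent g (f ξ) ξ zb))
    (h u : ℝ) (hmom0 : h = ∫ ξ, f ξ) (hmom1 : h * u = ∫ ξ, ξ * f ξ) :
    h * u ^ 2 / 2 + g * h ^ 2 / 2 + g * zb * h ≤ ∫ ξ, Hent g (f ξ) ξ zb := by
  have hπ : (0 : ℝ) < Real.pi := Real.pi_pos
  have hh0 : 0 ≤ h := hmom0 ▸ integral_nonneg hfnn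
  set a : ℝ := Real.sqrt (2 * g * h) with haa
  have ha0 : 0 ≤ a := Real.sqrt_nonneg _
  have ha2 : a ^ 2 = 2 * g * h := Real.sq_sqrt (by positivity)
  -- the cube of the Maxwellian, rewritten
  have hMcube : ∀ ξ, (Mbar g h u ξ) ^ 3 =
      Real.sqrt (max (a ^ 2 - (ξ - u) ^ 2) 0) ^ 3 * (1 / (g * Real.pi)) ^ 3 := by
    intro ξ
    rw [Mbar, ha2]
    ring
  -- continuity and compact support of the cube
  have contM : Continuous fun ξ => (Mbar g h u ξ) ^ 3 := by
    apply Continuous.pow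
    unfold Mbar
    exact ((continuous_const.sub ((continuous_id.sub continuous_const).pow 2)).max
      continuous_const).sqrt.div_const _
  have hvanish : ∀ ξ ∉ Set.Icc (u - a) (u + a), (Mbar g h u ξ) ^ 3 = 0 := by
    intro ξ hξ
    have hout : a ^ 2 ≤ (ξ - u) ^ 2 := by
      simp only [Set.mem_Icc, not_and_or, not_le] at hξ
      rcases hξ with hlt | hlt
      · nlinarith
      · nlinarith
    rw [hMcube, max_eq_right (by rw [ha2] at hout ⊢; linarith)]
    simp
  have integM : Integrable fun ξ => (Mbar g h u ξ) ^ 3 :=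
    contM.integrable_of_hasCompactSupport
      (HasCompactSupport.intro isCompact_Icc hvanish)
  -- value of the integral of the cube
  have hMint : ∫ ξ, (Mbar g h u ξ) ^ 3 =
      3 * Real.pi / 8 * a ^ 4 * (1 / (g * Real.pi)) ^ 3 := by
    simp_rw [hMcube]
    rw [integral_mul_const, integral_sqrt_max_cube a u ha0]
  -- pointwise lower bound on the entropy
  have key : ∀ ξ, (g * h - u ^ 2 / 2 + g * zb) * f ξ + u * (ξ * f ξ)
      - g ^ 2 * Real.pi ^ 2 / 3 * (Mbar g h u ξ) ^ 3 ≤ Hent g (f ξ) ξ zb := by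
    intro ξ
    set m : ℝ := Mbar g h u ξ with hm
    have hm0 : 0 ≤ m := div_nonneg (Real.sqrt_nonneg _) (by positivity)
    have hmsq : (g * Real.pi) ^ 2 * m ^ 2 = max (2 * g * h - (ξ - u) ^ 2) 0 := by
      rw [hm, Mbar, div_pow, Real.sq_sqrt (le_max_right _ _)]
      field_simp
    have hmax : 2 * g * h - (ξ - u) ^ 2 ≤ (g * Real.pi) ^ 2 * m ^ 2 := by
      rw [hmsq]; exact le_max_left _ _
    have hB : 0 ≤ ((ξ - u) ^ 2 - 2 * g * h + (g * Real.pi) ^ 2 * m ^ 2) * f ξ :=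
      mul_nonneg (by linarith) (hfnn ξ)
    have hC : 0 ≤ (g * Real.pi) ^ 2 * ((f ξ - m) ^ 2 * (f ξ + 2 * m)) :=
      mul_nonneg (sq_nonneg _) (mul_nonneg (sq_nonneg _) (by linarith [hfnn ξ]))
    rw [Hent]
    nlinarith [hB, hC]
  -- integrability of the lower bound
  have i1 : Integrable fun ξ => (g * h - u ^ 2 / 2 + g * zb) * f ξ := hint.const_mul _
  have i2 : Integrable fun ξ => u * (ξ * f ξ) := hint'.const_mul _
  have i12 : Integrable fun ξ => (g * h - u ^ 2 / 2 + g * zb) * f ξ + u * (ξ * f ξ) := i1.add i2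
  have i3 : Integrable fun ξ => g ^ 2 * Real.pi ^ 2 / 3 * (Mbar g h u ξ) ^ 3 :=
    integM.const_mul _
  have integLHS : Integrable fun ξ => (g * h - u ^ 2 / 2 + g * zb) * f ξ + u * (ξ * f ξ)
      - g ^ 2 * Real.pi ^ 2 / 3 * (Mbar g h u ξ) ^ 3 := i12.sub i3
  have hmono : (∫ ξ, ((g * h - u ^ 2 / 2 + g * zb) * f ξ + u * (ξ * f ξ)
      - g ^ 2 * Real.pi ^ 2 / 3 * (Mbar g h u ξ) ^ 3)) ≤ ∫ ξ, Hent g (f ξ) ξ zb :=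
    integral_mono integLHS hintH key
  have hcalc : (∫ ξ, ((g * h - u ^ 2 / 2 + g * zb) * f ξ + u * (ξ * f ξ)
      - g ^ 2 * Real.pi ^ 2 / 3 * (Mbar g h u ξ) ^ 3))
      = (g * h - u ^ 2 / 2 + g * zb) * h + u * (h * u)
        - g ^ 2 * Real.pi ^ 2 / 3 * (3 * Real.pi / 8 * a ^ 4 * (1 / (g * Real.pi)) ^ 3) := by
    rw [integral_sub i12 i3, integral_add i1 i2,
      integral_const_mul, integral_const_mul, integral_const_mul,
      ← hmom0, ← hmom1, hMint]
  rw [hcalc] at hmono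
  have ha4 : a ^ 4 = (2 * g * h) ^ 2 := by rw [← ha2]; ring
  have hval : g ^ 2 * Real.pi ^ 2 / 3 * (3 * Real.pi / 8 * a ^ 4 * (1 / (g * Real.pi)) ^ 3)
      = g * h ^ 2 / 2 := by
    rw [ha4]
    field_simp
    ring
  rw [hval] at hmono
  linarith [hmono]
end

section
/- The matrix A = I_N + Δt B is invertible, and all entries of its inverse A^{-1} are nonnegative; consequently, if a vector m ∈ ℝ^N has nonnegative entries then A^{-1} m has nonnegative entries. -/
open Matrix

/-- The matrix `A = I_N + Δt B` of the implicit vertical-exchange step is invertible,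
its inverse has nonnegative entries, and consequently `A⁻¹` maps entrywise-nonnegative
vectors to entrywise-nonnegative vectors. Here `B` is the tridiagonal matrix with
`B_{α,α} = ((G_{α−1/2})₊ − (G_{α+1/2})₋)/h_α`, `B_{α,α−1} = (G_{α−1/2})₋/h_{α−1}`,
`B_{α,α+1} = −(G_{α+1/2})₊/h_{α+1}` (0-based indexing: row `i` is layer `α = i+1`,
and `G k` denotes `G_{k+1/2}`, with `G 0 = G N = 0`). -/
theorem implicit_matrix_inverse_nonneg
    (N : ℕ) (hN : 1 ≤ N) (Δt : ℝ) (hΔt : 0 < Δt)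
    (h : ℕ → ℝ) (hh : ∀ k, k < N → 0 < h k)
    (G : ℕ → ℝ) (hG0 : G 0 = 0) (hGN : G N = 0)
    (B : Matrix (Fin N) (Fin N) ℝ)
    (hBdiag : ∀ i : Fin N,
      B i i = (max (G i.val) 0 - min (G (i.val + 1)) 0) / h i.val)
    (hBsub : ∀ i j : Fin N, j.val + 1 = i.val →
      B i j = min (G i.val) 0 / h j.val)
    (hBsup : ∀ i j : Fin N, i.val + 1 = j.val →
      B i j = -(max (G j.val) 0) / h j.val)
    (hBoff : ∀ i j : Fin N,
      i.val ≠ j.val → j.val + 1 ≠ i.val → i.val + 1 ≠ j.val → B i j = 0) :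
    IsUnit (1 + Δt • B) ∧
    (∀ i j : Fin N, 0 ≤ (1 + Δt • B)⁻¹ i j) ∧
    (∀ m : Fin N → ℝ, (∀ i, 0 ≤ m i) → ∀ i, 0 ≤ ((1 + Δt • B)⁻¹ *ᵥ m) i) := by
  set A : Matrix (Fin N) (Fin N) ℝ := 1 + Δt • B with hA
  -- off-diagonal entries of B are nonpositive
  have hBoffnp : ∀ p q : Fin N, p ≠ q → B p q ≤ 0 := by
    intro p q hpq
    by_cases h1 : (q : ℕ) + 1 = (p : ℕ)
    · rw [hBsub p q h1]
      exact div_nonpos_of_nonpos_of_nonneg (min_le_right _ _) (hh q q.isLt).le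
    · by_cases h2 : (p : ℕ) + 1 = (q : ℕ)
      · rw [hBsup p q h2]
        exact div_nonpos_of_nonpos_of_nonneg (neg_nonpos_of_nonneg (le_max_right _ _))
          (hh q q.isLt).le
      · rw [hBoff p q (fun hv => hpq (Fin.ext hv)) h1 h2]
  have hAoff : ∀ p q : Fin N, p ≠ q → A p q ≤ 0 := by
    intro p q hpq
    have : A p q = Δt * B p q := by
      simp [hA, Matrix.one_apply_ne hpq]
    rw [this]
    exact mul_nonpos_of_nonneg_of_nonpos hΔt.le (hBoffnp p q hpq)
  -- column sums of B vanish
  have hBcol : ∀ q : Fin N, ∑ p, B p q = 0 := by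
    intro q
    set a : ℝ := max (G q.val) 0 with ha
    set b : ℝ := min (G (q.val + 1)) 0 with hb
    have hrepr : ∀ p : Fin N, B p q =
        (if p = q then (a - b) / h q.val else 0) +
        (if (p : ℕ) = q.val + 1 then b / h q.val else 0) +
        (if (p : ℕ) + 1 = q.val then -a / h q.val else 0) := by
      intro p
      by_cases h1 : p = q
      · subst h1
        rw [hBdiag p]
        have c2 : ¬ ((p : ℕ) = p.val + 1) := by omega
        have c3 : ¬ ((p : ℕ) + 1 = p.val) := by omega
        simp [c2, c3, ha, hb]
      · have hval : (p : ℕ) ≠ (q : ℕ) := fun hv => h1 (Fin.ext hv)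
        by_cases h2 : (q : ℕ) + 1 = (p : ℕ)
        · rw [hBsub p q h2]
          have hpq1 : (p : ℕ) = q.val + 1 := h2.symm
          have h3 : ¬ ((p : ℕ) + 1 = (q : ℕ)) := by omega
          simp only [if_neg h1, if_pos hpq1, if_neg h3]
          rw [hb, ← h2]
          ring
        · by_cases h3 : (p : ℕ) + 1 = (q : ℕ)
          · rw [hBsup p q h3]
            have h2' : ¬ ((p : ℕ) = q.val + 1) := by omega
            simp only [if_neg h1, if_neg h2', if_pos h3]
            simp [ha]
          · rw [hBoff p q hval h2 h3]
            have h2' : ¬ ((p : ℕ) = q.val + 1) := by omega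
            simp [h1, h2', h3]
    calc ∑ p, B p q
        = (∑ p : Fin N, if p = q then (a - b) / h q.val else 0) +
          (∑ p : Fin N, if (p : ℕ) = q.val + 1 then b / h q.val else 0) +
          (∑ p : Fin N, if (p : ℕ) + 1 = q.val then -a / h q.val else 0) := by
          rw [← Finset.sum_add_distrib, ← Finset.sum_add_distrib]
          exact Finset.sum_congr rfl fun p _ => hrepr p
      _ = (a - b) / h q.val + b / h q.val + (-a) / h q.val := by
          congr 1
          congr 1
          · simp
          · -- second sum
            by_cases hq1 : q.val + 1 < N
            · rw [Finset.sum_eq_single (⟨q.val + 1, hq1⟩ : Fin N)]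
              · simp
              · intro p _ hp
                have : ¬ ((p : ℕ) = q.val + 1) := fun hv => hp (Fin.ext hv)
                simp [this]
              · simp
            · have hqN : q.val + 1 = N := by omega
              have hb0 : b = 0 := by rw [hb, hqN, hGN]; simp
              rw [hb0]
              simp
          · -- third sum
            by_cases hq0 : 0 < q.val
            · have hlt : q.val - 1 < N := by omega
              rw [Finset.sum_eq_single (⟨q.val - 1, hlt⟩ : Fin N)]
              · simp; omega
              · intro p _ hp
                have : ¬ ((p : ℕ) + 1 = q.val) := by
                  intro hv
                  exact hp (Fin.ext (by simp; omega))
                simp [this]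
              · simp
            · have hq0' : q.val = 0 := by omega
              have ha0 : a = 0 := by rw [ha, hq0', hG0]; simp
              rw [ha0]
              simp
      _ = 0 := by ring
  -- column sums of A equal 1
  have hAcol : ∀ q : Fin N, ∑ p, A p q = 1 := by
    intro q
    have : ∑ p, A p q = (∑ p : Fin N, (1 : Matrix (Fin N) (Fin N) ℝ) p q)
        + Δt * ∑ p, B p q := by
      rw [Finset.mul_sum, ← Finset.sum_add_distrib]
      exact Finset.sum_congr rfl fun p _ => by simp [hA]
    rw [this, hBcol q, mul_zero, add_zero]
    rw [Finset.sum_eq_single q]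
    · simp [Matrix.one_apply]
    · intro p _ hp; simp [Matrix.one_apply_ne hp]
    · intro hq; exact absurd (Finset.mem_univ q) hq
  -- minimum principle
  have key : ∀ x : Fin N → ℝ, (∀ i, 0 ≤ ∑ p, A p i * x p) → ∀ i, 0 ≤ x i := by
    intro x hx i
    obtain ⟨i0, _, hmin⟩ := Finset.exists_min_image Finset.univ x
      ⟨⟨0, hN⟩, Finset.mem_univ _⟩
    have h1 : ∑ p, A p i0 * x p ≤ ∑ p, A p i0 * x i0 := by
      apply Finset.sum_le_sum
      intro p _
      rcases eq_or_ne p i0 with rfl | hne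
      · exact le_refl _
      · exact mul_le_mul_of_nonpos_left (hmin p (Finset.mem_univ p)) (hAoff p i0 hne)
    have h2 : ∑ p, A p i0 * x i0 = x i0 := by
      rw [← Finset.sum_mul, hAcol, one_mul]
    have h3 : 0 ≤ x i0 := le_trans (hx i0) (h2 ▸ h1)
    exact le_trans h3 (hmin i (Finset.mem_univ i))
  -- invertibility
  have hunit : IsUnit A := by
    rw [Matrix.isUnit_iff_isUnit_det, isUnit_iff_ne_zero]
    intro hdet
    have hdetT : Aᵀ.det = 0 := by rw [Matrix.det_transpose]; exact hdet
    obtain ⟨v, hv0, hv⟩ := (Matrix.exists_mulVec_eq_zero_iff).mpr hdetT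
    have hzero : ∀ i, ∑ p, A p i * v p = 0 := by
      intro i
      have := congrFun hv i
      simpa [Matrix.mulVec, dotProduct, Matrix.transpose_apply, mul_comm] using this
    have hpos : ∀ i, 0 ≤ v i := key v (fun i => (hzero i).ge)
    have hneg : ∀ i, 0 ≤ -v i := by
      apply key
      intro i
      have e : ∑ p, A p i * -v p = -∑ p, A p i * v p := by
        rw [← Finset.sum_neg_distrib]
        exact Finset.sum_congr rfl fun p _ => mul_neg _ _
      simp only [e, hzero i, neg_zero, le_refl]
    exact hv0 (funext fun i => le_antisymm (neg_nonneg.mp (hneg i)) (hpos i))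
  have hdetu : IsUnit A.det := (Matrix.isUnit_iff_isUnit_det A).mp hunit
  have hinvmul : A⁻¹ * A = 1 := Matrix.nonsing_inv_mul A hdetu
  -- inverse entries nonneg
  have hinvnn : ∀ i j : Fin N, 0 ≤ A⁻¹ i j := by
    intro i j
    apply key (fun p => A⁻¹ i p)
    intro q
    have : ∑ p, A p q * A⁻¹ i p = (A⁻¹ * A) i q := by
      rw [Matrix.mul_apply]
      exact Finset.sum_congr rfl fun p _ => mul_comm _ _
    rw [this, hinvmul, Matrix.one_apply]
    split <;> norm_num
  refine ⟨hunit, hinvnn, ?_⟩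
  intro m hm i
  rw [Matrix.mulVec, dotProduct]
  exact Finset.sum_nonneg fun j _ => mul_nonneg (hinvnn i j) (hm j)
end

section
/- For every vector T ∈ ℝ^N with nonnegative entries, one has ‖ (Aᵀ)^{-1} T ‖_∞ ≤ ‖ T ‖_∞, where A = I_N + Δt B; in particular (since Aᵀ 𝟙 = 𝟙 where 𝟙 is the all-ones vector) the solution of the transposed linear system is uniformly bounded by the data, independently of the sizes of h_1,…,h_N. -/
open Matrix

/-- For `A = I_N + Δt B` (same tridiagonal `B` as in the implicit vertical-exchange
step, whose columns sum to zero), one has `Aᵀ 𝟙 = 𝟙` and, for every vector `T` with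
nonnegative entries, `‖(Aᵀ)⁻¹ T‖_∞ ≤ ‖T‖_∞` (the sup norm on `Fin N → ℝ`):
the solution of the transposed linear system is bounded by the data,
uniformly in `h_1, …, h_N`. -/
theorem implicit_matrix_transpose_sup_norm_bound
    (N : ℕ) (hN : 1 ≤ N) (Δt : ℝ) (hΔt : 0 < Δt)
    (h : ℕ → ℝ) (hh : ∀ k, k < N → 0 < h k)
    (G : ℕ → ℝ) (hG0 : G 0 = 0) (hGN : G N = 0)
    (B : Matrix (Fin N) (Fin N) ℝ)
    (hBdiag : ∀ i : Fin N,
      B i i = (max (G i.val) 0 - min (G (i.val + 1)) 0) / h i.val)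
    (hBsub : ∀ i j : Fin N, j.val + 1 = i.val →
      B i j = min (G i.val) 0 / h j.val)
    (hBsup : ∀ i j : Fin N, i.val + 1 = j.val →
      B i j = -(max (G j.val) 0) / h j.val)
    (hBoff : ∀ i j : Fin N,
      i.val ≠ j.val → j.val + 1 ≠ i.val → i.val + 1 ≠ j.val → B i j = 0) :
    ((1 + Δt • B)ᵀ *ᵥ (fun _ => (1 : ℝ))) = (fun _ => (1 : ℝ)) ∧
    (∀ T : Fin N → ℝ, (∀ i, 0 ≤ T i) →
      ‖((1 + Δt • B)ᵀ)⁻¹ *ᵥ T‖ ≤ ‖T‖) := by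
  have hNe : Nonempty (Fin N) := ⟨⟨0, hN⟩⟩
  -- off-diagonal entries of B are nonpositive
  have hoff : ∀ i j : Fin N, j ≠ i → B j i ≤ 0 := by
    intro i j hne
    by_cases h2 : i.val + 1 = j.val
    · rw [hBsub j i h2]
      exact div_nonpos_of_nonpos_of_nonneg (min_le_right _ _) (hh i.val i.isLt).le
    · by_cases h3 : j.val + 1 = i.val
      · rw [hBsup j i h3]
        exact div_nonpos_of_nonpos_of_nonneg (neg_nonpos.2 (le_max_right _ _))
          (hh i.val i.isLt).le
      · rw [hBoff j i (fun hv => hne (Fin.ext hv)) h2 h3]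
  -- each column of B sums to zero
  have hcol : ∀ i : Fin N, ∑ j, B j i = 0 := by
    intro i
    have hdec : ∀ j : Fin N, B j i =
        (if j = i then (max (G i.val) 0 - min (G (i.val + 1)) 0) / h i.val else 0)
        + (if i.val + 1 = j.val then min (G (i.val + 1)) 0 / h i.val else 0)
        + (if j.val + 1 = i.val then -(max (G i.val) 0) / h i.val else 0) := by
      intro j
      by_cases h1 : j = i
      · subst h1
        simp [hBdiag j, Nat.succ_ne_self]
      · by_cases h2 : i.val + 1 = j.val
        · have h3 : ¬ (j.val + 1 = i.val) := by omega
          rw [hBsub j i h2, if_neg h1, if_pos h2, if_neg h3, ← h2]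
          ring
        · by_cases h3 : j.val + 1 = i.val
          · rw [hBsup j i h3, if_neg h1, if_neg h2, if_pos h3]
            ring
          · rw [hBoff j i (fun hv => h1 (Fin.ext hv)) h2 h3, if_neg h1, if_neg h2,
              if_neg h3]
            ring
    rw [Finset.sum_congr rfl (fun j _ => hdec j)]
    rw [Finset.sum_add_distrib, Finset.sum_add_distrib]
    have hs1 : ∑ j : Fin N, (if j = i then
        (max (G i.val) 0 - min (G (i.val + 1)) 0) / h i.val else 0)
        = (max (G i.val) 0 - min (G (i.val + 1)) 0) / h i.val := by
      simp
    have hs2 : ∑ j : Fin N, (if i.val + 1 = j.val then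
        min (G (i.val + 1)) 0 / h i.val else 0)
        = min (G (i.val + 1)) 0 / h i.val := by
      by_cases hlt : i.val + 1 < N
      · rw [Finset.sum_eq_single_of_mem (⟨i.val + 1, hlt⟩ : Fin N) (Finset.mem_univ _)]
        · simp
        · intro b _ hb
          refine if_neg (fun hc => hb (Fin.ext hc.symm))
      · have hEq : i.val + 1 = N := by have := i.isLt; omega
        rw [Finset.sum_eq_zero, hEq, hGN]
        · simp
        · intro j _
          refine if_neg (fun hc => ?_)
          have := j.isLt; omega
    have hs3 : ∑ j : Fin N, (if j.val + 1 = i.val then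
        -(max (G i.val) 0) / h i.val else 0)
        = -(max (G i.val) 0) / h i.val := by
      by_cases h0 : i.val = 0
      · rw [Finset.sum_eq_zero, h0, hG0]
        · simp
        · intro j _
          refine if_neg (fun hc => ?_)
          omega
      · obtain ⟨m, hm⟩ := Nat.exists_eq_succ_of_ne_zero h0
        have hmN : m < N := by have := i.isLt; omega
        rw [Finset.sum_eq_single_of_mem (⟨m, hmN⟩ : Fin N) (Finset.mem_univ _)]
        · rw [if_pos]; simpa using hm.symm
        · intro b _ hb
          refine if_neg (fun hc => hb ?_)
          have hbv : (b : ℕ) = m := by omega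
          exact Fin.ext (by simp [hbv])
    rw [hs1, hs2, hs3]
    ring
  -- the mulVec formula
  have hmv : ∀ (x : Fin N → ℝ) (i : Fin N),
      ((1 + Δt • B)ᵀ *ᵥ x) i = x i + Δt * ∑ j, B j i * x j := by
    intro x i
    simp only [Matrix.mulVec, dotProduct, Matrix.transpose_apply, Matrix.add_apply,
      Matrix.smul_apply, Matrix.one_apply, smul_eq_mul]
    rw [Finset.sum_congr rfl (fun j _ => add_mul _ _ _), Finset.sum_add_distrib]
    congr 1
    · simp [ite_mul]
    · rw [Finset.mul_sum]
      exact Finset.sum_congr rfl fun j _ => mul_assoc _ _ _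
  -- maximum principle pieces
  have hmaxP : ∀ (x : Fin N → ℝ) (i : Fin N), (∀ j, x j ≤ x i) →
      x i ≤ ((1 + Δt • B)ᵀ *ᵥ x) i := by
    intro x i hx
    rw [hmv]
    have h1 : ∑ j, B j i * x j = ∑ j, B j i * (x j - x i) := by
      have h2 : ∑ j, B j i * (x j - x i)
          = ∑ j, B j i * x j - (∑ j, B j i) * x i := by
        rw [Finset.sum_mul, ← Finset.sum_sub_distrib]
        exact Finset.sum_congr rfl fun j _ => by ring
      rw [h2, hcol i]; ring
    have h2 : 0 ≤ ∑ j, B j i * (x j - x i) := by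
      refine Finset.sum_nonneg fun j _ => ?_
      by_cases hj : j = i
      · subst hj; simp
      · rw [show B j i * (x j - x i) = (-(B j i)) * (x i - x j) by ring]
        exact mul_nonneg (neg_nonneg.2 (hoff i j hj)) (sub_nonneg.2 (hx j))
    rw [h1]
    nlinarith
  have hminP : ∀ (x : Fin N → ℝ) (i : Fin N), (∀ j, x i ≤ x j) →
      ((1 + Δt • B)ᵀ *ᵥ x) i ≤ x i := by
    intro x i hx
    rw [hmv]
    have h1 : ∑ j, B j i * x j = ∑ j, B j i * (x j - x i) := by
      have h2 : ∑ j, B j i * (x j - x i)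
          = ∑ j, B j i * x j - (∑ j, B j i) * x i := by
        rw [Finset.sum_mul, ← Finset.sum_sub_distrib]
        exact Finset.sum_congr rfl fun j _ => by ring
      rw [h2, hcol i]; ring
    have h2 : ∑ j, B j i * (x j - x i) ≤ 0 := by
      refine Finset.sum_nonpos fun j _ => ?_
      by_cases hj : j = i
      · subst hj; simp
      · exact mul_nonpos_of_nonpos_of_nonneg (hoff i j hj) (sub_nonneg.2 (hx j))
    rw [h1]
    nlinarith
  -- part 1 : Aᵀ 𝟙 = 𝟙
  have hone : ((1 + Δt • B)ᵀ *ᵥ (fun _ => (1 : ℝ))) = (fun _ => (1 : ℝ)) := by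
    funext i
    rw [hmv]
    simp [hcol i]
  -- invertibility
  have hdet : ((1 + Δt • B)ᵀ).det ≠ 0 := by
    intro hd
    obtain ⟨v, hv0, hv⟩ := (Matrix.exists_mulVec_eq_zero_iff).2 hd
    obtain ⟨imax, himax⟩ := Finite.exists_max v
    obtain ⟨imin, himin⟩ := Finite.exists_min v
    have h1 : v imax ≤ 0 := by
      have := hmaxP v imax himax
      rw [hv] at this
      simpa using this
    have h2 : 0 ≤ v imin := by
      have := hminP v imin himin
      rw [hv] at this
      simpa using this
    exact hv0 (funext fun j => le_antisymm (le_trans (himax j) h1)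
      (le_trans h2 (himin j)))
  refine ⟨hone, fun T hT => ?_⟩
  set x : Fin N → ℝ := ((1 + Δt • B)ᵀ)⁻¹ *ᵥ T with hx
  have hMx : (1 + Δt • B)ᵀ *ᵥ x = T := by
    rw [hx, Matrix.mulVec_mulVec, Matrix.mul_nonsing_inv _ (isUnit_iff_ne_zero.2 hdet), Matrix.one_mulVec]
  obtain ⟨imax, himax⟩ := Finite.exists_max x
  obtain ⟨imin, himin⟩ := Finite.exists_min x
  have h1 : x imax ≤ T imax := by
    have := hmaxP x imax himax
    rwa [hMx] at this
  have h2 : 0 ≤ x imin := by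
    have := hminP x imin himin
    rw [hMx] at this
    exact le_trans (hT imin) this
  have hTb : T imax ≤ ‖T‖ := by
    have := norm_le_pi_norm T imax
    rw [Real.norm_eq_abs] at this
    exact le_trans (le_abs_self _) this
  refine (pi_norm_le_iff_of_nonneg (norm_nonneg T)).2 fun j => ?_
  rw [Real.norm_eq_abs, abs_le]
  constructor
  · linarith [himin j, norm_nonneg T]
  · linarith [himax j]
end

section
/- Positivity of the flat-bottom implicit–explicit layer-averaged kinetic scheme: under the CFL condition Δt ≤ (1/2) Δx_i / ( |u_{α,i}| + √(2 g h_i) ) for all α and i, the updated kinetic densities satisfy M⁺_{α,i}(ξ) ≥ 0 for all α = 1,…,N, all i ∈ ℤ and all ξ ∈ ℝ. -/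
open Finset MeasureTheory

/-- Positivity of the flat-bottom implicit–explicit layer-averaged kinetic scheme:
under the CFL condition `Δt ≤ (1/2)Δx_i/(|u_{α,i}| + √(2gh_i))` (written in the
equivalent product form `(|u_{α,i}| + √(2gh_i))·Δt ≤ Δx_i/2`), the updated kinetic
densities of the implicit–explicit scheme satisfy `M⁺_{α,i}(ξ) ≥ 0` for all layers
`α = 1,…,N`, all cells `i ∈ ℤ` and all `ξ ∈ ℝ`. The index `α` of `G`, `Nk` stands
for the interface `α+1/2` (so `G 0 = G N = 0`, `Nk 0 = Nk N = 0`). -/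
theorem flat_bottom_scheme_positivity
    (g : ℝ) (hg : 0 < g)
    (N : ℕ) (hN : 1 ≤ N)
    (l : ℕ → ℝ) (hl : ∀ α ∈ Icc 1 N, 0 < l α) (hlsum : ∑ α ∈ Icc 1 N, l α = 1)
    (Δt : ℝ) (hΔt : 0 < Δt)
    (Δx : ℤ → ℝ) (hΔx : ∀ i, 0 < Δx i)
    (σ : ℤ → ℝ) (hσ : ∀ i, σ i = Δt / Δx i)
    (h : ℤ → ℝ) (hh : ∀ i, 0 ≤ h i)
    (u : ℕ → ℤ → ℝ)
    (M : ℕ → ℤ → ℝ → ℝ)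
    (hM : ∀ (α : ℕ) (i : ℤ) (ξ : ℝ), M α i ξ = l α * Mbar g (h i) (u α i) ξ)
    (Mhalf : ℕ → ℤ → ℝ → ℝ)
    (hMhalf : ∀ (α : ℕ) (i : ℤ) (ξ : ℝ),
      Mhalf α i ξ = if 0 < ξ then M α i ξ else M α (i + 1) ξ)
    (Mstar : ℕ → ℤ → ℝ → ℝ)
    (hMstar : ∀ (α : ℕ) (i : ℤ) (ξ : ℝ),
      Mstar α i ξ = M α i ξ - σ i * ξ * (Mhalf α i ξ - Mhalf α (i - 1) ξ))
    (hnew : ℤ → ℝ)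
    (hhnew : ∀ i : ℤ, hnew i = ∑ α ∈ Icc 1 N, ∫ ξ : ℝ, Mstar α i ξ)
    (G : ℕ → ℤ → ℝ)
    (hG0 : ∀ i, G 0 i = 0) (hGN : ∀ i, G N i = 0)
    (hG : ∀ α ∈ Icc 1 (N - 1), ∀ i : ℤ,
      Δx i * G α i =
        ∑ j ∈ Icc 1 α,
          ((∫ ξ : ℝ, ξ * (Mhalf j i ξ - Mhalf j (i - 1) ξ))
            - l j * ∑ p ∈ Icc 1 N, ∫ ξ : ℝ, ξ * (Mhalf p i ξ - Mhalf p (i - 1) ξ)))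
    (Mplus Nk : ℕ → ℤ → ℝ → ℝ)
    (hNk0 : ∀ i ξ, Nk 0 i ξ = 0) (hNkN : ∀ i ξ, Nk N i ξ = 0)
    (hNk : ∀ α ∈ Icc 1 (N - 1), ∀ (i : ℤ) (ξ : ℝ),
      Nk α i ξ = G α i / hnew i *
        (if G α i ≤ 0 then Mplus α i ξ / l α else Mplus (α + 1) i ξ / l (α + 1)))
    (hMplus : ∀ α ∈ Icc 1 N, ∀ (i : ℤ) (ξ : ℝ),
      Mplus α i ξ =
        if 0 < hnew i then Mstar α i ξ + Δt * (Nk α i ξ - Nk (α - 1) i ξ) else 0)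
    (CFL : ∀ α ∈ Icc 1 N, ∀ i : ℤ,
      (|u α i| + Real.sqrt (2 * g * h i)) * Δt ≤ Δx i / 2) :
    ∀ α ∈ Icc 1 N, ∀ (i : ℤ) (ξ : ℝ), 0 ≤ Mplus α i ξ := by
  -- positivity of σ
  have hσpos : ∀ i : ℤ, 0 < σ i := fun i => by
    rw [hσ]; exact div_pos hΔt (hΔx i)
  -- Mbar is nonnegative
  have hMbar : ∀ h' u' ξ' : ℝ, 0 ≤ Mbar g h' u' ξ' := fun h' u' ξ' =>
    div_nonneg (Real.sqrt_nonneg _) (by positivity)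
  -- M is nonnegative
  have hMnn : ∀ α ∈ Icc 1 N, ∀ (i : ℤ) (ξ : ℝ), 0 ≤ M α i ξ := by
    intro α hα i ξ
    rw [hM]
    exact mul_nonneg (hl α hα).le (hMbar _ _ _)
  -- support bound: on the support of M, the CFL condition gives σ|ξ| ≤ 1
  have hsupp : ∀ α ∈ Icc 1 N, ∀ (i : ℤ) (ξ : ℝ), M α i ξ ≠ 0 → σ i * |ξ| ≤ 1 := by
    intro α hα i ξ hMneM
    have hbar : Mbar g (h i) (u α i) ξ ≠ 0 := by
      intro h0; apply hMneM; rw [hM, h0, mul_zero]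
    have hmax : 0 < 2 * g * h i - (ξ - u α i) ^ 2 := by
      by_contra hle
      push_neg at hle
      apply hbar
      unfold Mbar
      rw [max_eq_right hle, Real.sqrt_zero, zero_div]
    have habs : |ξ - u α i| < Real.sqrt (2 * g * h i) := by
      rw [Real.lt_sqrt (abs_nonneg _), sq_abs]
      linarith
    have hξ : |ξ| ≤ |u α i| + Real.sqrt (2 * g * h i) := by
      have : |ξ| ≤ |u α i| + |ξ - u α i| := by
        have := abs_add_le (u α i) (ξ - u α i)
        simpa using this
      linarith
    have hcfl := CFL α hα i
    have h1 : |ξ| * Δt ≤ Δx i / 2 := by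
      calc |ξ| * Δt ≤ (|u α i| + Real.sqrt (2 * g * h i)) * Δt :=
            mul_le_mul_of_nonneg_right hξ hΔt.le
        _ ≤ Δx i / 2 := hcfl
    rw [hσ]
    rw [div_mul_eq_mul_div, div_le_one (hΔx i)]
    calc Δt * |ξ| = |ξ| * Δt := mul_comm _ _
      _ ≤ Δx i / 2 := h1
      _ ≤ Δx i := by linarith [hΔx i]
  -- Mstar is nonnegative
  have hMstarnn : ∀ α ∈ Icc 1 N, ∀ (i : ℤ) (ξ : ℝ), 0 ≤ Mstar α i ξ := by
    intro α hα i ξ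
    rw [hMstar, hMhalf, hMhalf]
    rcases lt_trichotomy ξ 0 with hξ | hξ | hξ
    · rw [if_neg (by linarith), if_neg (by linarith)]
      rw [show i - 1 + 1 = i from by ring]
      have key : M α i ξ - σ i * ξ * (M α (i + 1) ξ - M α i ξ)
          = (1 + σ i * ξ) * M α i ξ + (-(σ i * ξ)) * M α (i + 1) ξ := by ring
      rw [key]
      apply add_nonneg
      · by_cases h0 : M α i ξ = 0
        · rw [h0, mul_zero]
        · have hb := hsupp α hα i ξ h0
          rw [abs_of_neg hξ] at hb
          exact mul_nonneg (by nlinarith) (hMnn α hα i ξ)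
      · exact mul_nonneg (by nlinarith [hσpos i]) (hMnn α hα (i + 1) ξ)
    · subst hξ
      simpa only [mul_zero, zero_mul, sub_zero] using hMnn α hα i 0
    · rw [if_pos hξ, if_pos hξ]
      have key : M α i ξ - σ i * ξ * (M α i ξ - M α (i - 1) ξ)
          = (1 - σ i * ξ) * M α i ξ + (σ i * ξ) * M α (i - 1) ξ := by ring
      rw [key]
      apply add_nonneg
      · by_cases h0 : M α i ξ = 0
        · rw [h0, mul_zero]
        · have hb := hsupp α hα i ξ h0
          rw [abs_of_pos hξ] at hb
          exact mul_nonneg (by nlinarith) (hMnn α hα i ξ)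
      · exact mul_nonneg (by nlinarith [hσpos i]) (hMnn α hα (i - 1) ξ)
  -- main argument
  intro α hα i ξ
  by_cases hpos : 0 < hnew i
  swap
  · rw [hMplus α hα i ξ, if_neg hpos]
  by_contra hneg
  push_neg at hneg
  classical
  -- the set of layers where Mplus is negative
  set P : Finset ℕ := (Icc 1 N).filter (fun β => Mplus β i ξ < 0) with hP
  have hαP : α ∈ P := by
    rw [hP, mem_filter]
    exact ⟨hα, hneg⟩
  have hPsub : ∀ β ∈ P, β ∈ Icc 1 N := fun β hβ => (mem_filter.mp hβ).1
  have hPneg : ∀ β ∈ P, Mplus β i ξ < 0 := fun β hβ => (mem_filter.mp hβ).2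
  have hPnonneg : ∀ β ∈ Icc 1 N, β ∉ P → 0 ≤ Mplus β i ξ := by
    intro β hβ hβP
    by_contra hc
    exact hβP (mem_filter.mpr ⟨hβ, by linarith⟩)
  set f : ℕ → ℝ := fun β => Nk β i ξ with hf
  -- sign facts for the interface terms
  have factA : ∀ β : ℕ, β ∈ P → β + 1 ∉ P → 0 ≤ f β := by
    intro β hβ hβ1
    have hβIcc := hPsub β hβ
    rw [mem_Icc] at hβIcc
    rcases eq_or_lt_of_le hβIcc.2 with hβN | hβN
    · show (0:ℝ) ≤ Nk β i ξ
      rw [hβN, hNkN]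
    · have hβ' : β ∈ Icc 1 (N - 1) := mem_Icc.mpr ⟨hβIcc.1, by omega⟩
      have hβm : β ∈ Icc 1 N := mem_Icc.mpr hβIcc
      have hβ1Icc : β + 1 ∈ Icc 1 N := mem_Icc.mpr ⟨by omega, by omega⟩
      show (0:ℝ) ≤ Nk β i ξ
      rw [hNk β hβ' i ξ]
      by_cases hGle : G β i ≤ 0
      · rw [if_pos hGle]
        exact mul_nonneg_iff.mpr (Or.inr ⟨div_nonpos_of_nonpos_of_nonneg hGle hpos.le,
          div_nonpos_of_nonpos_of_nonneg (hPneg β hβ).le (hl β hβm).le⟩)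
      · rw [if_neg hGle]
        push_neg at hGle
        exact mul_nonneg (div_nonneg hGle.le hpos.le)
          (div_nonneg (hPnonneg (β + 1) hβ1Icc hβ1) (hl (β + 1) hβ1Icc).le)
  have factB : ∀ β : ℕ, β ∉ P → β + 1 ∈ P → f β ≤ 0 := by
    intro β hβ hβ1
    have hβ1Icc := hPsub (β + 1) hβ1
    rw [mem_Icc] at hβ1Icc
    rcases Nat.eq_zero_or_pos β with hβ0 | hβ0
    · show Nk β i ξ ≤ 0
      rw [hβ0, hNk0]
    · have hβIcc : β ∈ Icc 1 N := mem_Icc.mpr ⟨hβ0, by omega⟩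
      have hβ' : β ∈ Icc 1 (N - 1) := mem_Icc.mpr ⟨hβ0, by omega⟩
      show Nk β i ξ ≤ 0
      rw [hNk β hβ' i ξ]
      by_cases hGle : G β i ≤ 0
      · rw [if_pos hGle]
        exact mul_nonpos_iff.mpr (Or.inr ⟨div_nonpos_of_nonpos_of_nonneg hGle hpos.le,
          div_nonneg (hPnonneg β hβIcc hβ) (hl β hβIcc).le⟩)
      · rw [if_neg hGle]
        push_neg at hGle
        exact mul_nonpos_iff.mpr (Or.inl ⟨(div_nonneg hGle.le hpos.le),
          div_nonpos_of_nonpos_of_nonneg (hPneg (β + 1) hβ1).le (hl (β + 1) (mem_Icc.mpr hβ1Icc)).le⟩)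
  -- rewrite the sums over P as sums over Icc 0 N
  have hPsub' : P ⊆ Icc 0 N := fun β hβ => by
    have := hPsub β hβ; rw [mem_Icc] at this ⊢; omega
  have hS1 : ∑ β ∈ P, f β = ∑ β ∈ Icc 0 N, (if β ∈ P then f β else 0) := by
    rw [Finset.sum_ite_mem, Finset.inter_eq_right.mpr hPsub']
  have hS2 : ∑ β ∈ P, f (β - 1) = ∑ β ∈ Icc 0 N, (if β + 1 ∈ P then f β else 0) := by
    rw [← Finset.sum_filter]
    apply Finset.sum_nbij' (fun β => β - 1) (fun β => β + 1)
    · intro a ha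
      have h1 := hPsub a ha
      rw [mem_Icc] at h1
      rw [mem_filter, mem_Icc]
      constructor
      · omega
      · rwa [Nat.sub_add_cancel h1.1]
    · intro a ha
      rw [mem_filter] at ha
      exact ha.2
    · intro a ha
      have h1 := hPsub a ha
      rw [mem_Icc] at h1
      omega
    · intro a _; omega
    · intro a _; rfl
  -- the telescoped interface contribution is nonnegative
  have hT : 0 ≤ ∑ β ∈ P, f β - ∑ β ∈ P, f (β - 1) := by
    rw [hS1, hS2, ← Finset.sum_sub_distrib]
    apply Finset.sum_nonneg
    intro β _
    by_cases h1 : β ∈ P <;> by_cases h2 : β + 1 ∈ P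
    · rw [if_pos h1, if_pos h2]; simp
    · rw [if_pos h1, if_neg h2, sub_zero]; exact factA β h1 h2
    · rw [if_neg h1, if_pos h2, zero_sub, neg_nonneg]; exact factB β h1 h2
    · rw [if_neg h1, if_neg h2]; simp
  -- sum of the scheme over P
  have hsum : ∑ β ∈ P, Mplus β i ξ
      = ∑ β ∈ P, Mstar β i ξ + Δt * (∑ β ∈ P, f β - ∑ β ∈ P, f (β - 1)) := by
    have h1 : ∀ β ∈ P, Mplus β i ξ = Mstar β i ξ + Δt * (f β - f (β - 1)) := by
      intro β hβ
      rw [hMplus β (hPsub β hβ) i ξ, if_pos hpos]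
    rw [Finset.sum_congr rfl h1, Finset.sum_add_distrib, ← Finset.mul_sum,
      Finset.sum_sub_distrib]
  have hlhs : ∑ β ∈ P, Mplus β i ξ < 0 :=
    Finset.sum_neg hPneg ⟨α, hαP⟩
  have hrhs : 0 ≤ ∑ β ∈ P, Mstar β i ξ + Δt * (∑ β ∈ P, f β - ∑ β ∈ P, f (β - 1)) :=
    add_nonneg (Finset.sum_nonneg fun β hβ => hMstarnn β (hPsub β hβ) i ξ)
      (mul_nonneg hΔt.le hT)
  rw [hsum] at hlhs
  linarith
end

section
/- Positivity of the hydrostatic-reconstruction layer-averaged kinetic scheme with topography: under the CFL condition Δt < Δx_i / ( |u_{α,i}| + 2 √(2 g h_i) ) for all α and i, the updated kinetic densities satisfy M⁺_{α,i}(ξ) ≥ 0 for all α = 1,…,N, all i ∈ ℤ and all ξ ∈ ℝ. -/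
open Finset MeasureTheory

lemma Mbar_nonneg {g : ℝ} (hg : 0 < g) (h u ξ : ℝ) : 0 ≤ Mbar g h u ξ :=
  div_nonneg (Real.sqrt_nonneg _) (by positivity)

lemma Mbar_mono {g : ℝ} (hg : 0 < g) {h1 h2 : ℝ} (hle : h1 ≤ h2) (u ξ : ℝ) :
    Mbar g h1 u ξ ≤ Mbar g h2 u ξ := by
  unfold Mbar
  have hπ : (0:ℝ) < g * Real.pi := by positivity
  gcongr


lemma Mbar_support {g h u ξ : ℝ} (hg : 0 < g) (hne : Mbar g h u ξ ≠ 0) :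
    |ξ - u| ≤ Real.sqrt (2 * g * h) := by
  have h1 : Real.sqrt (max (2 * g * h - (ξ - u) ^ 2) 0) ≠ 0 := by
    intro h0
    exact hne (by unfold Mbar; rw [h0]; simp)
  have h2 : ¬ (max (2 * g * h - (ξ - u) ^ 2) 0 ≤ 0) := by
    intro hle
    exact h1 (Real.sqrt_eq_zero'.mpr hle)
  push_neg at h2
  have h3 : 0 < 2 * g * h - (ξ - u) ^ 2 := by
    rcases lt_max_iff.mp h2 with h4 | h4
    · exact h4
    · exact absurd h4 (lt_irrefl 0)
  rw [← Real.sqrt_sq_eq_abs]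
  exact Real.sqrt_le_sqrt (by linarith)

lemma kinetic_bound (σ p q A B C r : ℝ) (hσ : 0 ≤ σ) (hA : 0 ≤ A)
    (hB : 0 ≤ B) (hBA : B ≤ A) (hC : 0 ≤ C) (hCA : C ≤ A) (hr : 0 ≤ r)
    (hK : A = 0 ∨ σ * (|p| + |q|) ≤ 1) :
    0 ≤ A - σ * (p * B + q * C) + r := by
  rcases hK with hA0 | hK
  · have hB0 : B = 0 := le_antisymm (hA0 ▸ hBA) hB
    have hC0 : C = 0 := le_antisymm (hA0 ▸ hCA) hC
    rw [hA0, hB0, hC0]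
    simp [hr]
  · have h1 : p * B ≤ |p| * A :=
      le_trans (mul_le_mul_of_nonneg_right (le_abs_self p) hB)
        (mul_le_mul_of_nonneg_left hBA (abs_nonneg p))
    have h2 : q * C ≤ |q| * A :=
      le_trans (mul_le_mul_of_nonneg_right (le_abs_self q) hC)
        (mul_le_mul_of_nonneg_left hCA (abs_nonneg q))
    have h3 : σ * (p * B + q * C) ≤ σ * ((|p| + |q|) * A) :=
      mul_le_mul_of_nonneg_left (by linarith) hσ
    have h4 : σ * (|p| + |q|) * A ≤ 1 * A := mul_le_mul_of_nonneg_right hK hA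
    nlinarith

lemma telescope_sum (χ F : ℕ → ℝ) (h0 : F 0 = 0) (n : ℕ) :
    ∑ α ∈ Icc 1 n, χ α * (F α - F (α - 1)) =
      (∑ k ∈ Icc 1 n, (χ k - χ (k + 1)) * F k) + χ (n + 1) * F n := by
  induction n with
  | zero => simp [h0]
  | succ m ih =>
    rw [Finset.sum_Icc_succ_top (by omega : 1 ≤ m + 1),
        Finset.sum_Icc_succ_top (by omega : 1 ≤ m + 1), ih]
    have hm1 : (m + 1 : ℕ) - 1 = m := by omega
    rw [hm1]
    ring

/-- Positivity of the hydrostatic-reconstruction layer-averaged kinetic scheme with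
topography: under the CFL condition `Δt < Δx_i/(|u_{α,i}| + 2√(2gh_i))` (written in
the equivalent product form `(|u_{α,i}| + 2√(2gh_i))·Δt < Δx_i`), the updated kinetic
densities satisfy `M⁺_{α,i}(ξ) ≥ 0` for all `α = 1,…,N`, `i ∈ ℤ`, `ξ ∈ ℝ`.
Interface index convention: `Mm α i = M_{α,i+1/2−}`, `Mp α i = M_{α,i+1/2+}`,
`δp α i = δM_{α,i+1/2−}`, `δm α i = δM_{α,i−1/2+}`, and the index `α` of `G`, `Nk`
stands for the interface `α+1/2`. -/
theorem topography_scheme_positivity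
    (g : ℝ) (hg : 0 < g)
    (N : ℕ) (hN : 1 ≤ N)
    (l : ℕ → ℝ) (hl : ∀ α ∈ Icc 1 N, 0 < l α) (hlsum : ∑ α ∈ Icc 1 N, l α = 1)
    (Δt : ℝ) (hΔt : 0 < Δt)
    (Δx : ℤ → ℝ) (hΔx : ∀ i, 0 < Δx i)
    (σ : ℤ → ℝ) (hσ : ∀ i, σ i = Δt / Δx i)
    (zb : ℤ → ℝ)
    (h : ℤ → ℝ) (hh : ∀ i, 0 ≤ h i)
    (u : ℕ → ℤ → ℝ)
    (zhalf : ℤ → ℝ) (hzhalf : ∀ i : ℤ, zhalf i = max (zb i) (zb (i + 1)))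
    (hm : ℤ → ℝ) (hhm : ∀ i : ℤ, hm i = max (h i + zb i - zhalf i) 0)
    (hp : ℤ → ℝ) (hhp : ∀ i : ℤ, hp i = max (h (i + 1) + zb (i + 1) - zhalf i) 0)
    (M : ℕ → ℤ → ℝ → ℝ)
    (hM : ∀ (α : ℕ) (i : ℤ) (ξ : ℝ), M α i ξ = l α * Mbar g (h i) (u α i) ξ)
    (Mm : ℕ → ℤ → ℝ → ℝ)
    (hMm : ∀ (α : ℕ) (i : ℤ) (ξ : ℝ), Mm α i ξ = l α * Mbar g (hm i) (u α i) ξ)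
    (Mp : ℕ → ℤ → ℝ → ℝ)
    (hMp : ∀ (α : ℕ) (i : ℤ) (ξ : ℝ), Mp α i ξ = l α * Mbar g (hp i) (u α (i + 1)) ξ)
    (Mhalf : ℕ → ℤ → ℝ → ℝ)
    (hMhalf : ∀ (α : ℕ) (i : ℤ) (ξ : ℝ),
      Mhalf α i ξ = if 0 < ξ then Mm α i ξ else Mp α i ξ)
    (δp : ℕ → ℤ → ℝ → ℝ)
    (hδp : ∀ (α : ℕ) (i : ℤ) (ξ : ℝ),
      δp α i ξ = (ξ - u α i) * (M α i ξ - Mm α i ξ))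
    (δm : ℕ → ℤ → ℝ → ℝ)
    (hδm : ∀ (α : ℕ) (i : ℤ) (ξ : ℝ),
      δm α i ξ = (ξ - u α i) * (M α i ξ - Mp α (i - 1) ξ))
    (Mstar : ℕ → ℤ → ℝ → ℝ)
    (hMstar : ∀ (α : ℕ) (i : ℤ) (ξ : ℝ),
      Mstar α i ξ = M α i ξ
        - σ i * (ξ * Mhalf α i ξ + δp α i ξ - ξ * Mhalf α (i - 1) ξ - δm α i ξ))
    (hnew : ℤ → ℝ)
    (hhnew : ∀ i : ℤ, hnew i = ∑ α ∈ Icc 1 N, ∫ ξ : ℝ, Mstar α i ξ)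
    (G : ℕ → ℤ → ℝ)
    (hG0 : ∀ i, G 0 i = 0) (hGN : ∀ i, G N i = 0)
    (hG : ∀ α ∈ Icc 1 (N - 1), ∀ i : ℤ,
      Δx i * G α i =
        ∑ j ∈ Icc 1 α,
          ((∫ ξ : ℝ, ξ * (Mhalf j i ξ - Mhalf j (i - 1) ξ))
            - l j * ∑ p ∈ Icc 1 N, ∫ ξ : ℝ, ξ * (Mhalf p i ξ - Mhalf p (i - 1) ξ)))
    (Mplus Nk : ℕ → ℤ → ℝ → ℝ)
    (hNk0 : ∀ i ξ, Nk 0 i ξ = 0) (hNkN : ∀ i ξ, Nk N i ξ = 0)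
    (hNk : ∀ α ∈ Icc 1 (N - 1), ∀ (i : ℤ) (ξ : ℝ),
      Nk α i ξ = G α i / hnew i *
        (if G α i ≤ 0 then Mplus α i ξ / l α else Mplus (α + 1) i ξ / l (α + 1)))
    (hMplus : ∀ α ∈ Icc 1 N, ∀ (i : ℤ) (ξ : ℝ),
      Mplus α i ξ =
        if 0 < hnew i then Mstar α i ξ + Δt * (Nk α i ξ - Nk (α - 1) i ξ) else 0)
    (CFL : ∀ α ∈ Icc 1 N, ∀ i : ℤ,
      (|u α i| + 2 * Real.sqrt (2 * g * h i)) * Δt < Δx i) :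
    ∀ α ∈ Icc 1 N, ∀ (i : ℤ) (ξ : ℝ), 0 ≤ Mplus α i ξ := by
  intro α hα i ξ
  by_cases hpos : 0 < hnew i
  swap
  · rw [hMplus α hα i ξ, if_neg hpos]
  -- Step A : nonnegativity of Mstar
  have hσpos : ∀ j : ℤ, 0 < σ j := fun j => by rw [hσ]; exact div_pos hΔt (hΔx j)
  have hMstar_nonneg : ∀ β ∈ Icc 1 N, ∀ (j : ℤ) (ζ : ℝ), 0 ≤ Mstar β j ζ := by
    intro β hβ j ζ
    have hlβ := hl β hβ
    have e : (j : ℤ) - 1 + 1 = j := by ring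
    have hA : 0 ≤ M β j ζ := by
      rw [hM]; exact mul_nonneg hlβ.le (Mbar_nonneg hg _ _ _)
    have hB : 0 ≤ Mm β j ζ := by
      rw [hMm]; exact mul_nonneg hlβ.le (Mbar_nonneg hg _ _ _)
    have hC : 0 ≤ Mp β (j - 1) ζ := by
      rw [hMp]; exact mul_nonneg hlβ.le (Mbar_nonneg hg _ _ _)
    have hD : 0 ≤ Mm β (j - 1) ζ := by
      rw [hMm]; exact mul_nonneg hlβ.le (Mbar_nonneg hg _ _ _)
    have hE : 0 ≤ Mp β j ζ := by
      rw [hMp]; exact mul_nonneg hlβ.le (Mbar_nonneg hg _ _ _)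
    have hzb : zb j ≤ zhalf j := by rw [hzhalf]; exact le_max_left _ _
    have hm_le : hm j ≤ h j := by
      rw [hhm]; exact max_le (by linarith) (hh j)
    have hzb2 : zb j ≤ zhalf (j - 1) := by
      rw [hzhalf (j - 1), e]; exact le_max_right _ _
    have hp_le : hp (j - 1) ≤ h j := by
      rw [hhp (j - 1), e]; exact max_le (by linarith) (hh j)
    have hBA : Mm β j ζ ≤ M β j ζ := by
      rw [hM, hMm]
      exact mul_le_mul_of_nonneg_left (Mbar_mono hg hm_le _ _) hlβ.le
    have hCA : Mp β (j - 1) ζ ≤ M β j ζ := by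
      rw [hM, hMp, e]
      exact mul_le_mul_of_nonneg_left (Mbar_mono hg hp_le _ _) hlβ.le
    have hK : M β j ζ = 0 ∨ σ j * (|u β j| + |ζ - u β j|) ≤ 1 := by
      by_cases hz : Mbar g (h j) (u β j) ζ = 0
      · left; rw [hM, hz, mul_zero]
      · right
        have habs := Mbar_support hg hz
        have hs0 : 0 ≤ Real.sqrt (2 * g * h j) := Real.sqrt_nonneg _
        have hcfl := CFL β hβ j
        rw [hσ, div_mul_eq_mul_div, div_le_one (hΔx j)]
        nlinarith [abs_nonneg (u β j), hΔt]
    rw [hMstar]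
    simp only [hδp, hδm, hMhalf]
    by_cases hζ : 0 < ζ
    · rw [if_pos hζ, if_pos hζ]
      have heq : M β j ζ - σ j * (ζ * Mm β j ζ + (ζ - u β j) * (M β j ζ - Mm β j ζ)
            - ζ * Mm β (j - 1) ζ - (ζ - u β j) * (M β j ζ - Mp β (j - 1) ζ))
          = M β j ζ - σ j * (u β j * Mm β j ζ + (ζ - u β j) * Mp β (j - 1) ζ)
            + σ j * ζ * Mm β (j - 1) ζ := by ring
      rw [heq]
      exact kinetic_bound (σ j) (u β j) (ζ - u β j) _ _ _ _ (hσpos j).le hA hB hBA hC hCA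
        (mul_nonneg (mul_nonneg (hσpos j).le hζ.le) hD) hK
    · rw [if_neg hζ, if_neg hζ]
      push_neg at hζ
      have heq : M β j ζ - σ j * (ζ * Mp β j ζ + (ζ - u β j) * (M β j ζ - Mm β j ζ)
            - ζ * Mp β (j - 1) ζ - (ζ - u β j) * (M β j ζ - Mp β (j - 1) ζ))
          = M β j ζ - σ j * ((u β j - ζ) * Mm β j ζ + (-(u β j)) * Mp β (j - 1) ζ)
            + σ j * (-ζ) * Mp β j ζ := by ring
      rw [heq]
      have hK' : M β j ζ = 0 ∨ σ j * (|u β j - ζ| + |-(u β j)|) ≤ 1 := by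
        have habs : |u β j - ζ| + |-(u β j)| = |u β j| + |ζ - u β j| := by
          rw [abs_neg, abs_sub_comm]; ring
        rw [habs]; exact hK
      exact kinetic_bound (σ j) (u β j - ζ) (-(u β j)) _ _ _ _ (hσpos j).le hA hB hBA hC hCA
        (mul_nonneg (mul_nonneg (hσpos j).le (by linarith)) hE) hK'
  -- Step B : positivity of Mplus via a discrete maximum principle
  by_contra hcon
  push_neg at hcon
  have hMp_eq : ∀ β ∈ Icc 1 N, Mplus β i ξ
      = Mstar β i ξ + Δt * (Nk β i ξ - Nk (β - 1) i ξ) := by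
    intro β hβ
    rw [hMplus β hβ i ξ, if_pos hpos]
  set χ : ℕ → ℝ := fun β => if Mplus β i ξ < 0 then 1 else 0 with hχ
  have hS1 : ∑ β ∈ Icc 1 N, χ β * Mplus β i ξ < 0 := by
    have hlt : ∑ β ∈ Icc 1 N, χ β * Mplus β i ξ < ∑ β ∈ Icc 1 N, (0 : ℝ) := by
      apply Finset.sum_lt_sum
      · intro b _
        by_cases hb : Mplus b i ξ < 0
        · simp only [hχ, if_pos hb, one_mul]; linarith
        · simp only [hχ, if_neg hb, zero_mul]; exact le_rfl
      · exact ⟨α, hα, by simp only [hχ, if_pos hcon, one_mul]; linarith⟩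
    simpa using hlt
  have htel : ∑ β ∈ Icc 1 N, χ β * (Nk β i ξ - Nk (β - 1) i ξ)
      = (∑ k ∈ Icc 1 N, (χ k - χ (k + 1)) * Nk k i ξ) + χ (N + 1) * Nk N i ξ :=
    telescope_sum χ (fun β => Nk β i ξ) (hNk0 i ξ) N
  have hT : 0 ≤ ∑ β ∈ Icc 1 N, χ β * (Nk β i ξ - Nk (β - 1) i ξ) := by
    rw [htel, hNkN i ξ, mul_zero, add_zero]
    apply Finset.sum_nonneg
    intro k hk
    rcases eq_or_ne k N with hkN | hkN
    · rw [hkN, hNkN i ξ, mul_zero]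
    · have hk' := Finset.mem_Icc.mp hk
      have hk1 : k ∈ Icc 1 (N - 1) := Finset.mem_Icc.mpr (by omega)
      have hk2 : k + 1 ∈ Icc 1 N := Finset.mem_Icc.mpr (by omega)
      have hNkk := hNk k hk1 i ξ
      have hlk := hl k hk
      have hlk1 := hl (k + 1) hk2
      by_cases hP : Mplus k i ξ < 0 <;> by_cases hQ : Mplus (k + 1) i ξ < 0
      · simp [hχ, hP, hQ]
      · push_neg at hQ
        simp only [hχ, if_pos hP, if_neg (not_lt.mpr hQ), sub_zero, one_mul]
        rw [hNkk]
        by_cases hGk : G k i ≤ 0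
        · rw [if_pos hGk]
          have h1 : G k i / hnew i ≤ 0 := div_nonpos_iff.mpr (Or.inr ⟨hGk, hpos.le⟩)
          have h2 : Mplus k i ξ / l k ≤ 0 := div_nonpos_iff.mpr (Or.inr ⟨hP.le, hlk.le⟩)
          nlinarith [mul_nonneg (neg_nonneg.mpr h1) (neg_nonneg.mpr h2)]
        · rw [if_neg hGk]
          push_neg at hGk
          exact mul_nonneg (div_nonneg hGk.le hpos.le) (div_nonneg hQ hlk1.le)
      · push_neg at hP
        simp only [hχ, if_neg (not_lt.mpr hP), if_pos hQ, zero_sub, neg_mul, one_mul]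
        rw [neg_nonneg, hNkk]
        by_cases hGk : G k i ≤ 0
        · rw [if_pos hGk]
          have h1 : G k i / hnew i ≤ 0 := div_nonpos_iff.mpr (Or.inr ⟨hGk, hpos.le⟩)
          have h2 : 0 ≤ Mplus k i ξ / l k := div_nonneg hP hlk.le
          nlinarith [mul_nonneg (neg_nonneg.mpr h1) h2]
        · rw [if_neg hGk]
          push_neg at hGk
          have h1 : 0 ≤ G k i / hnew i := div_nonneg hGk.le hpos.le
          have h2 : Mplus (k + 1) i ξ / l (k + 1) ≤ 0 :=
            div_nonpos_iff.mpr (Or.inr ⟨hQ.le, hlk1.le⟩)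
          nlinarith [mul_nonneg h1 (neg_nonneg.mpr h2)]
      · simp [hχ, hP, hQ]
  have hS2 : ∑ β ∈ Icc 1 N, χ β * Mplus β i ξ
      = (∑ β ∈ Icc 1 N, χ β * Mstar β i ξ)
        + Δt * ∑ β ∈ Icc 1 N, χ β * (Nk β i ξ - Nk (β - 1) i ξ) := by
    rw [Finset.mul_sum, ← Finset.sum_add_distrib]
    apply Finset.sum_congr rfl
    intro b hb
    rw [hMp_eq b hb]
    ring
  have hS3 : 0 ≤ ∑ β ∈ Icc 1 N, χ β * Mstar β i ξ := by
    apply Finset.sum_nonneg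
    intro b hb
    apply mul_nonneg _ (hMstar_nonneg b hb i ξ)
    by_cases hb' : Mplus b i ξ < 0 <;> simp [hχ, hb']
  have : 0 ≤ ∑ β ∈ Icc 1 N, χ β * Mplus β i ξ := by
    rw [hS2]
    exact add_nonneg hS3 (mul_nonneg hΔt.le hT)
  linarith
end

section
/- The hydrostatic-reconstruction layer-averaged kinetic scheme is kinetic well-balanced: if u_{α,i} = 0 for all α and all i, and h_i + z_{b,i} is constant in i, then the scheme preserves the data exactly, i.e. M⁺_{α,i}(ξ) = M_{α,i}(ξ) for all α, i and all ξ ∈ ℝ. -/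
open Finset MeasureTheory

lemma odd_integral_zero (F : ℝ → ℝ) (hF : ∀ x, F (-x) = -F x) : ∫ x : ℝ, F x = 0 := by
  have h1 : ∫ x : ℝ, F (-x) = ∫ x : ℝ, F x := MeasureTheory.integral_neg_eq_self F _
  have h2 : ∫ x : ℝ, F (-x) = -∫ x : ℝ, F x := by
    simp_rw [hF]; exact MeasureTheory.integral_neg F
  linarith

lemma Mbar_even (g a ξ : ℝ) : Mbar g a 0 (-ξ) = Mbar g a 0 ξ := by
  unfold Mbar
  have : (-ξ - 0) ^ 2 = (ξ - 0) ^ 2 := by ring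
  rw [this]

lemma Mbar_zero (g ξ : ℝ) : Mbar g 0 0 ξ = 0 := by
  unfold Mbar
  rw [max_eq_right (by nlinarith [sq_nonneg (ξ - 0)]), Real.sqrt_zero, zero_div]

lemma Mbar_integral_pos (g a : ℝ) (hg : 0 < g) (ha : 0 < a) :
    0 < ∫ ξ : ℝ, Mbar g a 0 ξ := by
  set r := Real.sqrt (2 * g * a) with hr
  have hr2 : r ^ 2 = 2 * g * a := Real.sq_sqrt (by positivity)
  have hrpos : 0 < r := Real.sqrt_pos.2 (by positivity)
  have hcont : Continuous (fun ξ : ℝ => Mbar g a 0 ξ) := by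
    unfold Mbar
    exact ((continuous_const.sub ((continuous_id.sub continuous_const).pow 2)).max
      continuous_const).sqrt.div_const _
  have hcs : HasCompactSupport (fun ξ : ℝ => Mbar g a 0 ξ) := by
    apply HasCompactSupport.intro (isCompact_Icc (a := -r) (b := r))
    intro x hx
    simp only [Set.mem_Icc, not_and_or, not_le] at hx
    have hx2 : 2 * g * a - (x - 0) ^ 2 ≤ 0 := by
      rcases hx with hx | hx
      · nlinarith
      · nlinarith
    unfold Mbar
    rw [max_eq_right hx2, Real.sqrt_zero, zero_div]
  have hint : MeasureTheory.Integrable (fun ξ : ℝ => Mbar g a 0 ξ) :=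
    hcont.integrable_of_hasCompactSupport hcs
  have hnonneg : 0 ≤ fun ξ : ℝ => Mbar g a 0 ξ := by
    intro ξ
    unfold Mbar
    positivity
  rw [MeasureTheory.integral_pos_iff_support_of_nonneg hnonneg hint]
  have hsub : Set.Ioo (-r) r ⊆ Function.support fun ξ : ℝ => Mbar g a 0 ξ := by
    intro x hx
    simp only [Set.mem_Ioo] at hx
    have hx2 : 0 < 2 * g * a - (x - 0) ^ 2 := by nlinarith
    have : 0 < Mbar g a 0 x := by
      unfold Mbar
      rw [max_eq_left hx2.le]
      have := Real.pi_pos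
      positivity
    exact this.ne'
  calc (0 : ENNReal) < MeasureTheory.volume (Set.Ioo (-r) r) := by
        rw [Real.volume_Ioo]
        simp only [ENNReal.ofReal_pos]
        linarith
    _ ≤ _ := MeasureTheory.measure_mono hsub

/-- Kinetic well-balancing of the hydrostatic-reconstruction layer-averaged kinetic
scheme with topography: if `u_{α,i} = 0` for all layers `α` and all cells `i`, and the
free surface `h_i + z_{b,i}` is constant in `i` (lake at rest), then the scheme
preserves the data exactly: `M⁺_{α,i}(ξ) = M_{α,i}(ξ)` for all `α`, `i` and `ξ`.
Interface index convention: `Mm α i = M_{α,i+1/2−}`, `Mp α i = M_{α,i+1/2+}`,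
`δp α i = δM_{α,i+1/2−}`, `δm α i = δM_{α,i−1/2+}`, and the index `α` of `G`, `Nk`
stands for the interface `α+1/2`. -/
theorem topography_scheme_well_balanced
    (g : ℝ) (hg : 0 < g)
    (N : ℕ) (hN : 1 ≤ N)
    (l : ℕ → ℝ) (hl : ∀ α ∈ Icc 1 N, 0 < l α) (hlsum : ∑ α ∈ Icc 1 N, l α = 1)
    (Δt : ℝ) (hΔt : 0 < Δt)
    (Δx : ℤ → ℝ) (hΔx : ∀ i, 0 < Δx i)
    (σ : ℤ → ℝ) (hσ : ∀ i, σ i = Δt / Δx i)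
    (zb : ℤ → ℝ)
    (h : ℤ → ℝ) (hh : ∀ i, 0 ≤ h i)
    (u : ℕ → ℤ → ℝ)
    (zhalf : ℤ → ℝ) (hzhalf : ∀ i : ℤ, zhalf i = max (zb i) (zb (i + 1)))
    (hm : ℤ → ℝ) (hhm : ∀ i : ℤ, hm i = max (h i + zb i - zhalf i) 0)
    (hp : ℤ → ℝ) (hhp : ∀ i : ℤ, hp i = max (h (i + 1) + zb (i + 1) - zhalf i) 0)
    (M : ℕ → ℤ → ℝ → ℝ)
    (hM : ∀ (α : ℕ) (i : ℤ) (ξ : ℝ), M α i ξ = l α * Mbar g (h i) (u α i) ξ)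
    (Mm : ℕ → ℤ → ℝ → ℝ)
    (hMm : ∀ (α : ℕ) (i : ℤ) (ξ : ℝ), Mm α i ξ = l α * Mbar g (hm i) (u α i) ξ)
    (Mp : ℕ → ℤ → ℝ → ℝ)
    (hMp : ∀ (α : ℕ) (i : ℤ) (ξ : ℝ), Mp α i ξ = l α * Mbar g (hp i) (u α (i + 1)) ξ)
    (Mhalf : ℕ → ℤ → ℝ → ℝ)
    (hMhalf : ∀ (α : ℕ) (i : ℤ) (ξ : ℝ),
      Mhalf α i ξ = if 0 < ξ then Mm α i ξ else Mp α i ξ)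
    (δp : ℕ → ℤ → ℝ → ℝ)
    (hδp : ∀ (α : ℕ) (i : ℤ) (ξ : ℝ),
      δp α i ξ = (ξ - u α i) * (M α i ξ - Mm α i ξ))
    (δm : ℕ → ℤ → ℝ → ℝ)
    (hδm : ∀ (α : ℕ) (i : ℤ) (ξ : ℝ),
      δm α i ξ = (ξ - u α i) * (M α i ξ - Mp α (i - 1) ξ))
    (Mstar : ℕ → ℤ → ℝ → ℝ)
    (hMstar : ∀ (α : ℕ) (i : ℤ) (ξ : ℝ),
      Mstar α i ξ = M α i ξ
        - σ i * (ξ * Mhalf α i ξ + δp α i ξ - ξ * Mhalf α (i - 1) ξ - δm α i ξ))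
    (hnew : ℤ → ℝ)
    (hhnew : ∀ i : ℤ, hnew i = ∑ α ∈ Icc 1 N, ∫ ξ : ℝ, Mstar α i ξ)
    (G : ℕ → ℤ → ℝ)
    (hG0 : ∀ i, G 0 i = 0) (hGN : ∀ i, G N i = 0)
    (hG : ∀ α ∈ Icc 1 (N - 1), ∀ i : ℤ,
      Δx i * G α i =
        ∑ j ∈ Icc 1 α,
          ((∫ ξ : ℝ, ξ * (Mhalf j i ξ - Mhalf j (i - 1) ξ))
            - l j * ∑ p ∈ Icc 1 N, ∫ ξ : ℝ, ξ * (Mhalf p i ξ - Mhalf p (i - 1) ξ)))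
    (Mplus Nk : ℕ → ℤ → ℝ → ℝ)
    (hNk0 : ∀ i ξ, Nk 0 i ξ = 0) (hNkN : ∀ i ξ, Nk N i ξ = 0)
    (hNk : ∀ α ∈ Icc 1 (N - 1), ∀ (i : ℤ) (ξ : ℝ),
      Nk α i ξ = G α i / hnew i *
        (if G α i ≤ 0 then Mplus α i ξ / l α else Mplus (α + 1) i ξ / l (α + 1)))
    (hMplus : ∀ α ∈ Icc 1 N, ∀ (i : ℤ) (ξ : ℝ),
      Mplus α i ξ =
        if 0 < hnew i then Mstar α i ξ + Δt * (Nk α i ξ - Nk (α - 1) i ξ) else 0)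
    (hu0 : ∀ α ∈ Icc 1 N, ∀ i : ℤ, u α i = 0)
    (hlake : ∀ i : ℤ, h i + zb i = h 0 + zb 0) :
    ∀ α ∈ Icc 1 N, ∀ (i : ℤ) (ξ : ℝ), Mplus α i ξ = M α i ξ := by
  -- interface heights coincide
  have hmeq : ∀ i : ℤ, hp i = hm i := by
    intro i
    rw [hhp, hhm]
    have h1 := hlake i
    have h2 := hlake (i + 1)
    congr 1
    linarith
  -- the interface Maxwellian is symmetric in ξ
  have hMhalf' : ∀ α ∈ Icc 1 N, ∀ (i : ℤ) (ξ : ℝ),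
      Mhalf α i ξ = l α * Mbar g (hm i) 0 ξ := by
    intro α hα i ξ
    rw [hMhalf, hMm, hMp, hmeq, hu0 α hα i, hu0 α hα (i + 1)]
    split <;> rfl
  -- the explicit step preserves the data
  have hMstar' : ∀ α ∈ Icc 1 N, ∀ (i : ℤ) (ξ : ℝ), Mstar α i ξ = M α i ξ := by
    intro α hα i ξ
    rw [hMstar, hδp, hδm, hMhalf' α hα i ξ, hMhalf' α hα (i - 1) ξ, hMm, hMp, hmeq,
      hu0 α hα i]
    have : i - 1 + 1 = i := by ring
    rw [this, hu0 α hα i]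
    ring
  -- each flux integral vanishes by oddness
  have hI : ∀ j ∈ Icc 1 N, ∀ i : ℤ,
      (∫ ξ : ℝ, ξ * (Mhalf j i ξ - Mhalf j (i - 1) ξ)) = 0 := by
    intro j hj i
    apply odd_integral_zero
    intro x
    rw [hMhalf' j hj i (-x), hMhalf' j hj (i - 1) (-x), hMhalf' j hj i x,
      hMhalf' j hj (i - 1) x, Mbar_even, Mbar_even]
    ring
  -- hence G vanishes
  have hGzero : ∀ α ∈ Icc 1 (N - 1), ∀ i : ℤ, G α i = 0 := by
    intro α hα i
    have h2 : Δx i * G α i = 0 := by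
      rw [hG α hα i]
      apply Finset.sum_eq_zero
      intro j hj
      simp only [Finset.mem_Icc] at hα hj
      have hjN : j ∈ Icc 1 N := by
        simp only [Finset.mem_Icc]
        omega
      rw [hI j hjN i, Finset.sum_eq_zero (fun p hp => hI p hp i)]
      ring
    rcases mul_eq_zero.mp h2 with h3 | h3
    · exact absurd h3 (hΔx i).ne'
    · exact h3
  -- hence all exchange terms vanish
  have hNkzero : ∀ (α : ℕ), α ≤ N → ∀ (i : ℤ) (ξ : ℝ), Nk α i ξ = 0 := by
    intro α hαN i ξ
    rcases Nat.eq_zero_or_pos α with h0 | h1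
    · rw [h0]; exact hNk0 i ξ
    rcases eq_or_lt_of_le hαN with hN' | hlt
    · rw [hN']; exact hNkN i ξ
    · have hmem : α ∈ Icc 1 (N - 1) := by simp only [Finset.mem_Icc]; omega
      rw [hNk α hmem i ξ, hGzero α hmem i]
      simp
  -- hnew is the water height integral
  have hhnew' : ∀ i : ℤ, hnew i = ∫ ξ : ℝ, Mbar g (h i) 0 ξ := by
    intro i
    rw [hhnew]
    have heach : ∀ α ∈ Icc 1 N,
        (∫ ξ : ℝ, Mstar α i ξ) = l α * ∫ ξ : ℝ, Mbar g (h i) 0 ξ := by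
      intro α hα
      have hfun : (fun ξ => Mstar α i ξ) = fun ξ => l α * Mbar g (h i) 0 ξ := by
        funext ξ
        rw [hMstar' α hα i ξ, hM, hu0 α hα i]
      rw [hfun, MeasureTheory.integral_const_mul _ _]
    rw [Finset.sum_congr rfl heach, ← Finset.sum_mul, hlsum, one_mul]
  -- conclusion
  intro α hα i ξ
  rw [hMplus α hα i ξ]
  have hαN : α ∈ Icc 1 N := hα
  simp only [Finset.mem_Icc] at hαN
  split_ifs with hpos
  · rw [hNkzero α hαN.2 i ξ, hNkzero (α - 1) (by omega) i ξ, hMstar' α hα i ξ]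
    ring
  · -- the cell is dry
    have hzero : h i = 0 := by
      by_contra hne
      have hip : 0 < h i := lt_of_le_of_ne (hh i) (Ne.symm hne)
      exact hpos (by rw [hhnew' i]; exact Mbar_integral_pos g (h i) hg hip)
    rw [hM, hu0 α hα i, hzero, Mbar_zero, mul_zero]
end

section
/- Entropy moments of the kinetic Maxwellian: for all h ≥ 0, u ∈ ℝ and z_b ∈ ℝ, ∫_ℝ H( M̄(h,u,ξ), ξ, z_b ) dξ = h u²/2 + g h²/2 + g z_b h, and ∫_ℝ ξ H( M̄(h,u,ξ), ξ, z_b ) dξ = u ( h u²/2 + g h² + g z_b h ). -/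
set_option maxHeartbeats 1000000

open MeasureTheory

open Real intervalIntegral

/-- Interval integral of an odd function over `[-1,1]` vanishes. -/
lemma odd_int_zero (f : ℝ → ℝ) (hf : ∀ x, f (-x) = - f x) :
    ∫ x in (-1:ℝ)..1, f x = 0 := by
  have h1 : (∫ x in (-1:ℝ)..1, f (-x)) = ∫ x in (-1:ℝ)..1, f x := by
    rw [intervalIntegral.integral_comp_neg]; norm_num
  have h2 : (∫ x in (-1:ℝ)..1, f (-x)) = - ∫ x in (-1:ℝ)..1, f x := by
    simp only [hf]; rw [intervalIntegral.integral_neg]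
  linarith

lemma unit_cube : ∫ x in (-1:ℝ)..1, Real.sqrt (1 - x^2) ^ 3 = 3 * π / 8 := by
  have hsub : (∫ θ in (-(π/2))..(π/2), Real.cos θ • (fun y => Real.sqrt (1 - y^2) ^ 3) (Real.sin θ))
      = ∫ x in Real.sin (-(π/2))..Real.sin (π/2), Real.sqrt (1 - x^2) ^ 3 := by
    have hg : Continuous (fun y : ℝ => Real.sqrt (1 - y^2) ^ 3) := by fun_prop
    exact intervalIntegral.integral_comp_smul_deriv
      (fun x _ => Real.hasDerivAt_sin x) Real.continuous_cos.continuousOn hg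
  rw [Real.sin_neg, Real.sin_pi_div_two] at hsub
  rw [← hsub]
  have hcong : ∀ θ ∈ Set.uIcc (-(π/2)) (π/2),
      Real.cos θ • (fun y => Real.sqrt (1 - y^2) ^ 3) (Real.sin θ) = Real.cos θ ^ 4 := by
    intro θ hθ
    rw [Set.uIcc_of_le (by linarith [Real.pi_pos])] at hθ
    have hc : 0 ≤ Real.cos θ := Real.cos_nonneg_of_mem_Icc hθ
    have hs : (1 : ℝ) - Real.sin θ ^ 2 = Real.cos θ ^ 2 := by
      have := Real.sin_sq_add_cos_sq θ; linarith
    simp only [smul_eq_mul, hs, Real.sqrt_sq hc]; ring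
  rw [intervalIntegral.integral_congr hcong]
  have h := @integral_cos_pow (-(π/2)) (π/2) 2
  norm_num at h
  rw [h]; ring

lemma unit_sq : ∫ x in (-1:ℝ)..1, x^2 * Real.sqrt (1 - x^2) = π / 8 := by
  have hcong : ∀ x ∈ Set.uIcc (-1:ℝ) 1,
      x^2 * Real.sqrt (1 - x^2) = Real.sqrt (1 - x^2) - Real.sqrt (1 - x^2) ^ 3 := by
    intro x hx
    rw [Set.uIcc_of_le (by norm_num)] at hx
    have h1 : (0:ℝ) ≤ 1 - x^2 := by nlinarith [hx.1, hx.2]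
    have h3 : Real.sqrt (1 - x^2) ^ 3 = (1 - x^2) * Real.sqrt (1 - x^2) := by
      rw [pow_succ, Real.sq_sqrt h1]
    rw [h3]; ring
  rw [intervalIntegral.integral_congr hcong,
    intervalIntegral.integral_sub
      (Continuous.intervalIntegrable (by fun_prop) _ _)
      (Continuous.intervalIntegrable (by fun_prop) _ _),
    integral_sqrt_one_sub_sq, unit_cube]
  ring

/-- Master integral. -/
lemma master (a c0 c1 c2 c3 d0 d1 : ℝ) (ha : 0 ≤ a) :
    (∫ x : ℝ, ((c0 + c1*x + c2*x^2 + c3*x^3) * Real.sqrt (max (a^2 - x^2) 0)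
        + (d0 + d1*x) * Real.sqrt (max (a^2 - x^2) 0) ^ 3))
    = c0 * (π * a^2 / 2) + c2 * (π * a^4 / 8) + d0 * (3 * π * a^4 / 8) := by
  set F : ℝ → ℝ := fun x => (c0 + c1*x + c2*x^2 + c3*x^3) * Real.sqrt (max (a^2 - x^2) 0)
        + (d0 + d1*x) * Real.sqrt (max (a^2 - x^2) 0) ^ 3 with hF
  have hsupp : ∀ x ∉ Set.Icc (-a) a, F x = 0 := by
    intro x hx
    have : a^2 - x^2 ≤ 0 := by
      simp only [Set.mem_Icc, not_and_or, not_le] at hx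
      rcases hx with h' | h' <;> nlinarith
    simp [hF, max_eq_right this]
  have step1 : (∫ x : ℝ, F x) = ∫ x in (-a)..a, F x := by
    rw [← setIntegral_eq_integral_of_forall_compl_eq_zero hsupp,
      integral_Icc_eq_integral_Ioc, ← intervalIntegral.integral_of_le (by linarith)]
  have hsub : (∫ t in (-1:ℝ)..1, a • F (a * t)) = ∫ x in (a * (-1))..(a * 1), F x := by
    have hFc : Continuous F := by unfold F; fun_prop
    exact intervalIntegral.integral_comp_smul_deriv
      (f := fun t => a * t) (f' := fun _ => a)
      (fun x _ => by simpa using (hasDerivAt_id x).const_mul a)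
      continuousOn_const hFc
  rw [mul_neg_one, mul_one] at hsub
  rw [step1, ← hsub]
  have hcong : ∀ t ∈ Set.uIcc (-1:ℝ) 1,
      a • F (a * t) =
        (a^2*c0) * Real.sqrt (1 - t^2) + (a^3*c1) * (t * Real.sqrt (1 - t^2))
        + (a^4*c2) * (t^2 * Real.sqrt (1 - t^2)) + (a^5*c3) * (t^3 * Real.sqrt (1 - t^2))
        + (a^4*d0) * (Real.sqrt (1 - t^2) ^ 3) + (a^5*d1) * (t * Real.sqrt (1 - t^2) ^ 3) := by
    intro t ht
    rw [Set.uIcc_of_le (by norm_num)] at ht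
    have h1 : (0:ℝ) ≤ 1 - t^2 := by nlinarith [ht.1, ht.2]
    have hmax : max (a^2 - (a*t)^2) 0 = a^2 * (1 - t^2) := by
      rw [show a^2 - (a*t)^2 = a^2 * (1 - t^2) by ring]
      exact max_eq_left (by positivity)
    have hs : Real.sqrt (max (a^2 - (a*t)^2) 0) = a * Real.sqrt (1 - t^2) := by
      rw [hmax, Real.sqrt_mul (sq_nonneg a), Real.sqrt_sq ha]
    simp only [hF, hs, smul_eq_mul]; ring
  rw [intervalIntegral.integral_congr hcong]
  have i1 : IntervalIntegrable (fun t : ℝ => (a^2*c0) * Real.sqrt (1 - t^2)) volume (-1) 1 :=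
    Continuous.intervalIntegrable (by fun_prop) _ _
  have i2 : IntervalIntegrable (fun t : ℝ => (a^3*c1) * (t * Real.sqrt (1 - t^2))) volume (-1) 1 :=
    Continuous.intervalIntegrable (by fun_prop) _ _
  have i3 : IntervalIntegrable (fun t : ℝ => (a^4*c2) * (t^2 * Real.sqrt (1 - t^2))) volume (-1) 1 :=
    Continuous.intervalIntegrable (by fun_prop) _ _
  have i4 : IntervalIntegrable (fun t : ℝ => (a^5*c3) * (t^3 * Real.sqrt (1 - t^2))) volume (-1) 1 :=
    Continuous.intervalIntegrable (by fun_prop) _ _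
  have i5 : IntervalIntegrable (fun t : ℝ => (a^4*d0) * (Real.sqrt (1 - t^2) ^ 3)) volume (-1) 1 :=
    Continuous.intervalIntegrable (by fun_prop) _ _
  have i6 : IntervalIntegrable (fun t : ℝ => (a^5*d1) * (t * Real.sqrt (1 - t^2) ^ 3)) volume (-1) 1 :=
    Continuous.intervalIntegrable (by fun_prop) _ _
  rw [intervalIntegral.integral_add (((((i1.add i2).add i3).add i4).add i5)) i6,
      intervalIntegral.integral_add ((((i1.add i2).add i3).add i4)) i5,
      intervalIntegral.integral_add (((i1.add i2).add i3)) i4,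
      intervalIntegral.integral_add ((i1.add i2)) i3,
      intervalIntegral.integral_add i1 i2]
  rw [intervalIntegral.integral_const_mul, intervalIntegral.integral_const_mul,
      intervalIntegral.integral_const_mul, intervalIntegral.integral_const_mul,
      intervalIntegral.integral_const_mul, intervalIntegral.integral_const_mul]
  have e2 : ∫ t in (-1:ℝ)..1, t * Real.sqrt (1 - t^2) = 0 := by
    apply odd_int_zero; intro x
    rw [show (1:ℝ) - (-x)^2 = 1 - x^2 by ring]; ring
  have e4 : ∫ t in (-1:ℝ)..1, t^3 * Real.sqrt (1 - t^2) = 0 := by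
    apply odd_int_zero; intro x
    rw [show (1:ℝ) - (-x)^2 = 1 - x^2 by ring]; ring
  have e6 : ∫ t in (-1:ℝ)..1, t * Real.sqrt (1 - t^2) ^ 3 = 0 := by
    apply odd_int_zero; intro x
    rw [show (1:ℝ) - (-x)^2 = 1 - x^2 by ring]; ring
  rw [e2, e4, e6, integral_sqrt_one_sub_sq, unit_sq, unit_cube]
  ring

/-- Entropy moments of the kinetic Maxwellian: for all `h ≥ 0`, `u ∈ ℝ`, `z_b ∈ ℝ`,
`∫ H(M̄(h,u,ξ),ξ,z_b) dξ = h u²/2 + g h²/2 + g z_b h` and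
`∫ ξ H(M̄(h,u,ξ),ξ,z_b) dξ = u (h u²/2 + g h² + g z_b h)`. -/
theorem maxwellian_entropy_moments
    (g : ℝ) (hg : 0 < g) (h u zb : ℝ) (hh : 0 ≤ h) :
    (∫ ξ : ℝ, Hent g (Mbar g h u ξ) ξ zb)
        = h * u ^ 2 / 2 + g * h ^ 2 / 2 + g * zb * h ∧
    (∫ ξ : ℝ, ξ * Hent g (Mbar g h u ξ) ξ zb)
        = u * (h * u ^ 2 / 2 + g * h ^ 2 + g * zb * h) := by
  have hg' : g ≠ 0 := ne_of_gt hg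
  have hπ : π ≠ 0 := Real.pi_ne_zero
  set a := Real.sqrt (2*g*h) with had
  have ha : 0 ≤ a := Real.sqrt_nonneg _
  have ha2 : a^2 = 2*g*h := Real.sq_sqrt (by positivity)
  have ha4 : a^4 = (2*g*h)^2 := by rw [show a^4 = (a^2)^2 by ring, ha2]
  constructor
  · have hcal : (∫ ξ : ℝ, Hent g (Mbar g h u ξ) ξ zb)
        = ∫ ξ : ℝ, (fun x : ℝ =>
            ((u^2/(2*g*π) + zb/π) + (u/(g*π))*x + (1/(2*g*π))*x^2 + 0*x^3)
              * Real.sqrt (max (a^2 - x^2) 0)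
            + (1/(6*g*π) + 0*x) * Real.sqrt (max (a^2 - x^2) 0) ^ 3) (ξ - u) := by
      congr 1; funext ξ
      simp only [Hent, Mbar, ha2]
      field_simp
      ring
    rw [hcal, MeasureTheory.integral_sub_right_eq_self (μ := volume) (fun x : ℝ =>
            ((u^2/(2*g*π) + zb/π) + (u/(g*π))*x + (1/(2*g*π))*x^2 + 0*x^3)
              * Real.sqrt (max (a^2 - x^2) 0)
            + (1/(6*g*π) + 0*x) * Real.sqrt (max (a^2 - x^2) 0) ^ 3) u,
      master a _ _ _ _ _ _ ha, ha2, ha4]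
    field_simp
    ring
  · have hcal : (∫ ξ : ℝ, ξ * Hent g (Mbar g h u ξ) ξ zb)
        = ∫ ξ : ℝ, (fun x : ℝ =>
            ((u^3/(2*g*π) + zb*u/π) + (3*u^2/(2*g*π) + zb/π)*x + (3*u/(2*g*π))*x^2
              + (1/(2*g*π))*x^3) * Real.sqrt (max (a^2 - x^2) 0)
            + (u/(6*g*π) + (1/(6*g*π))*x) * Real.sqrt (max (a^2 - x^2) 0) ^ 3) (ξ - u) := by
      congr 1; funext ξ
      simp only [Hent, Mbar, ha2]
      field_simp
      ring
    rw [hcal, MeasureTheory.integral_sub_right_eq_self (μ := volume) (fun x : ℝ =>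
            ((u^3/(2*g*π) + zb*u/π) + (3*u^2/(2*g*π) + zb/π)*x + (3*u/(2*g*π))*x^2
              + (1/(2*g*π))*x^3) * Real.sqrt (max (a^2 - x^2) 0)
            + (u/(6*g*π) + (1/(6*g*π))*x) * Real.sqrt (max (a^2 - x^2) 0) ^ 3) u,
      master a _ _ _ _ _ _ ha, ha2, ha4]
    field_simp
    ring
end
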